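/- arXiv:1006.2585 — 4 statements merged into one kernel-verified Lean document; each statement's English description precedes it below -/
import Mathlib

section
/- Almost surely, L_n = 0 for infinitely many n; consequently, with probability one every species born with fitness less than the critical value f_c becomes extinct after a finite random time (for every m with J_m = 0 and U_m < f_c there exists n > m with L_n = 0, at which time the species born at step m is dead). -/
open MeasureTheory ProbabilityTheory Filter

namespace GMSAux

variable {Ω : Type*}

/-- The increment of the auxiliary random walk. -/
noncomputable def xiF (c : ℝ) (J : ℕ → Ω → ℕ) (U : ℕ → Ω → ℝ) (n : ℕ) (ω : Ω) : ℝ :=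
  if J n ω = 0 ∧ U n ω < c then 1 else if J n ω = 1 then -1 else 0

/-- The auxiliary random walk. -/
noncomputable def SF (c : ℝ) (J : ℕ → Ω → ℕ) (U : ℕ → Ω → ℝ) (n : ℕ) (ω : Ω) : ℝ :=
  ∑ i ∈ Finset.range n, xiF c J U i ω

lemma xiF_abs_le (c : ℝ) (J : ℕ → Ω → ℕ) (U : ℕ → Ω → ℝ) (n : ℕ) (ω : Ω) :
    |xiF c J U n ω| ≤ 1 := by
  unfold xiF; split_ifs <;> norm_num

lemma SF_succ (c : ℝ) (J : ℕ → Ω → ℕ) (U : ℕ → Ω → ℝ) (n : ℕ) (ω : Ω) :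
    SF c J U (n + 1) ω = SF c J U n ω + xiF c J U n ω :=
  Finset.sum_range_succ _ _

lemma neg_le_SF (c : ℝ) (J : ℕ → Ω → ℕ) (U : ℕ → Ω → ℝ) (n : ℕ) (ω : Ω) :
    -(n : ℝ) ≤ SF c J U n ω := by
  induction n with
  | zero => simp [SF]
  | succ n ih =>
      rw [SF_succ]
      have h1 : -1 ≤ xiF c J U n ω := (abs_le.1 (xiF_abs_le c J U n ω)).1
      push_cast; linarith

section Det

variable (c : ℝ) (J : ℕ → Ω → ℕ) (U : ℕ → Ω → ℝ) (L : ℕ → Ω → ℕ)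

/-- One step of the population process equals the walk increment while positive. -/
lemma L_step (hJval : ∀ n ω, J n ω ≤ 1)
    (hL : ∀ n ω, L (n + 1) ω =
      if J n ω = 0 ∧ U n ω < c then L n ω + 1
      else if J n ω = 1 ∧ 0 < L n ω then L n ω - 1 else L n ω)
    (k : ℕ) (ω : Ω) (hpos : L k ω ≠ 0) :
    (L (k + 1) ω : ℝ) = (L k ω : ℝ) + xiF c J U k ω := by
  have hJ := hJval k ω
  have hLpos : 0 < L k ω := Nat.pos_of_ne_zero hpos
  rcases Nat.le_one_iff_eq_zero_or_eq_one.1 hJ with h0 | h1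
  · by_cases hU : U k ω < c
    · rw [hL, if_pos ⟨h0, hU⟩]; unfold xiF; rw [if_pos ⟨h0, hU⟩]; push_cast; ring
    · have hne1 : J k ω ≠ 1 := by omega
      rw [hL, if_neg (by tauto), if_neg (by tauto)]
      unfold xiF; rw [if_neg (by tauto), if_neg hne1]; ring
  · rw [hL, if_neg (by simp [h1]), if_pos ⟨h1, hLpos⟩]
    unfold xiF; rw [if_neg (by simp [h1]), if_pos h1]
    have : 1 ≤ L k ω := hLpos
    push_cast [Nat.cast_sub this]; ring

lemma dichotomy (hJval : ∀ n ω, J n ω ≤ 1)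
    (hL : ∀ n ω, L (n + 1) ω =
      if J n ω = 0 ∧ U n ω < c then L n ω + 1
      else if J n ω = 1 ∧ 0 < L n ω then L n ω - 1 else L n ω)
    (ω : Ω) (N : ℕ) :
    ∀ k, N ≤ k → (∃ j, N ≤ j ∧ j ≤ k ∧ L j ω = 0) ∨
      ((L k ω : ℝ) = (L N ω : ℝ) + SF c J U k ω - SF c J U N ω) := by
  intro k hk
  induction k, hk using Nat.le_induction with
  | base => right; ring
  | succ k hk ih =>
      rcases ih with ⟨j, h1, h2, h3⟩ | heq
      · exact Or.inl ⟨j, h1, h2.trans (Nat.le_succ k), h3⟩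
      · by_cases hz : L k ω = 0
        · exact Or.inl ⟨k, hk, Nat.le_succ k, hz⟩
        · right
          rw [L_step c J U L hJval hL k ω hz, SF_succ]
          linarith

lemma det_infinite (hJval : ∀ n ω, J n ω ≤ 1)
    (hL0 : ∀ ω, L 0 ω = 0)
    (hL : ∀ n ω, L (n + 1) ω =
      if J n ω = 0 ∧ U n ω < c then L n ω + 1
      else if J n ω = 1 ∧ 0 < L n ω then L n ω - 1 else L n ω)
    (ω : Ω) (hS : ∀ M : ℕ, ∃ n, SF c J U n ω ≤ -(M : ℝ)) :
    {n : ℕ | L n ω = 0}.Infinite := by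
  have key : ∀ N : ℕ, ∃ n, N ≤ n ∧ L n ω = 0 := by
    intro N
    obtain ⟨M0, hM0⟩ := exists_nat_gt ((L N ω : ℝ) - SF c J U N ω)
    obtain ⟨n, hn⟩ := hS (M0 + N)
    have hnge : N ≤ n := by
      have h1 : -(n : ℝ) ≤ SF c J U n ω := neg_le_SF c J U n ω
      have h2 : ((M0 + N : ℕ) : ℝ) ≤ (n : ℝ) := by push_cast at hn ⊢; linarith
      have h3 : M0 + N ≤ n := by exact_mod_cast h2
      omega
    rcases dichotomy c J U L hJval hL ω N n hnge with ⟨j, h1, _, h3⟩ | heq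
    · exact ⟨j, h1, h3⟩
    · exfalso
      have hcast : ((M0 + N : ℕ) : ℝ) = (M0 : ℝ) + (N : ℝ) := by push_cast; ring
      have h0 : (0 : ℝ) ≤ (L n ω : ℝ) := Nat.cast_nonneg _
      rw [hcast] at hn
      have hN0 : (0 : ℝ) ≤ (N : ℝ) := Nat.cast_nonneg _
      linarith
  intro hfin
  obtain ⟨b, hb⟩ := hfin.bddAbove
  obtain ⟨n, hn1, hn2⟩ := key (b + 1)
  exact absurd (hb hn2) (by omega)

end Det

section Prob

variable [MeasurableSpace Ω] (μ : Measure Ω) [IsProbabilityMeasure μ]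

/-- Second Borel–Cantelli: infinitely many death events. -/
lemma ae_frequently_J_one (p q : ℝ) (hp : 1 / 2 < p) (hp1 : p < 1) (hq : q = 1 - p)
    (J : ℕ → Ω → ℕ) (U : ℕ → Ω → ℝ)
    (hJmeas : ∀ n, Measurable (J n))
    (hJdist : ∀ n, μ {ω | J n ω = 1} = ENNReal.ofReal q)
    (hindep : iIndepFun
      (Sum.elim (fun n ω => (J n ω : ℝ)) U) μ) :
    ∀ᵐ ω ∂μ, ∃ᶠ n in atTop, J n ω = 1 := by
  classical
  have hq0 : 0 < q := by rw [hq]; linarith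
  set g : ℕ ⊕ ℕ → Ω → ℝ := Sum.elim (fun n ω => (J n ω : ℝ)) U with hg
  have hii : iIndep (fun k => MeasurableSpace.comap (g k) inferInstance) μ := hindep
  set B : ℕ → Set Ω := fun n => {ω | J n ω = 1} with hB
  have hBeq : ∀ n, B n = (fun ω => (J n ω : ℝ)) ⁻¹' {1} := by
    intro n; ext ω; simp [hB, Nat.cast_eq_one]
  have hBmeas : ∀ n, MeasurableSet (B n) := by
    intro n; rw [hBeq]
    exact (measurable_from_top.comp (hJmeas n)) (measurableSet_singleton (1 : ℝ))
  have hBind : iIndepSet B μ := by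
    rw [iIndepSet_iff_iIndep, iIndep_iff]
    intro s f hf
    have hfi : ∀ i ∈ s, MeasurableSet[MeasurableSpace.comap (g (Sum.inl i)) inferInstance] (f i) := by
      intro i hi
      have hle : MeasurableSpace.generateFrom {B i}
          ≤ MeasurableSpace.comap (g (Sum.inl i)) inferInstance := by
        refine MeasurableSpace.generateFrom_le ?_
        rintro t rfl
        exact ⟨{1}, measurableSet_singleton _, (hBeq i).symm⟩
      exact hle _ (hf i hi)
    have hmain := (iIndep_iff _ _).1 hii (s.image (Sum.inl : ℕ → ℕ ⊕ ℕ))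
      (f := fun k => Sum.rec (fun i => f i) (fun _ => Set.univ) k)
      (by intro k hk
          simp only [Finset.mem_image] at hk
          obtain ⟨i, hi, rfl⟩ := hk
          exact hfi i hi)
    have hInter : (⋂ k ∈ s.image (Sum.inl : ℕ → ℕ ⊕ ℕ),
        (Sum.rec (fun i => f i) (fun _ => Set.univ) k : Set Ω)) = ⋂ i ∈ s, f i := by
      ext ω
      simp [Finset.mem_image]
    have hProd : (∏ k ∈ s.image (Sum.inl : ℕ → ℕ ⊕ ℕ),
        μ (Sum.rec (fun i => f i) (fun _ => Set.univ) k)) = ∏ i ∈ s, μ (f i) :=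
      Finset.prod_image (fun a _ b _ h => Sum.inl.inj h)
    rw [hInter, hProd] at hmain
    exact hmain
  have htsum : (∑' n, μ (B n)) = ⊤ := by
    rw [show (fun n => μ (B n)) = fun _ => ENNReal.ofReal q from funext hJdist]
    exact ENNReal.tsum_const_eq_top_of_ne_zero (by simp [ENNReal.ofReal_eq_zero]; linarith)
  have hone := ProbabilityTheory.measure_limsup_eq_one hBmeas hBind htsum
  have hmem : ∀ᵐ ω ∂μ, ω ∈ limsup B atTop := by
    have h0 : μ (limsup B atTop)ᶜ = 0 := by
      rw [prob_compl_eq_zero_iff (MeasurableSet.measurableSet_limsup fun n => hBmeas n)]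
      exact hone
    rw [MeasureTheory.ae_iff]
    exact h0
  filter_upwards [hmem] with ω hω
  have hfreq : ∃ᶠ n in atTop, ω ∈ B n := mem_limsup_iff_frequently_mem.1 hω
  exact hfreq.mono fun n hn => hn

lemma ae_unbounded_below (p q : ℝ) (hp : 1 / 2 < p) (hp1 : p < 1) (hq : q = 1 - p)
    (J : ℕ → Ω → ℕ) (U : ℕ → Ω → ℝ)
    (hJmeas : ∀ n, Measurable (J n))
    (hUmeas : ∀ n, Measurable (U n))
    (hJval : ∀ n ω, J n ω ≤ 1)
    (hJdist : ∀ n, μ {ω | J n ω = 1} = ENNReal.ofReal q)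
    (hUdist : ∀ n, Measure.map (U n) μ = volume.restrict (Set.Icc (0 : ℝ) 1))
    (hindep : iIndepFun
      (Sum.elim (fun n ω => (J n ω : ℝ)) U) μ)
    (hfreq : ∀ᵐ ω ∂μ, ∃ᶠ n in atTop, J n ω = 1) :
    ∀ᵐ ω ∂μ, ∀ M : ℕ, ∃ n, SF (q / p) J U n ω ≤ -(M : ℝ) := by
  classical
  -- numeric facts
  have hp0 : (0 : ℝ) < p := by linarith
  have hq0 : (0 : ℝ) < q := by rw [hq]; linarith
  have hqp : q < p := by rw [hq]; linarith
  set c : ℝ := q / p with hc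
  have hc0 : 0 < c := div_pos hq0 hp0
  have hc1 : c ≤ 1 := by rw [hc, div_le_one hp0]; linarith
  -- the driving family and its generated σ-algebras
  set g : ℕ ⊕ ℕ → Ω → ℝ := Sum.elim (fun n ω => (J n ω : ℝ)) U with hg
  have hii : iIndep (fun k => MeasurableSpace.comap (g k) inferInstance) μ := hindep
  have hgmeas : ∀ k, Measurable (g k) := by
    rintro (n | n)
    · exact measurable_from_top.comp (hJmeas n)
    · exact hUmeas n
  set mS : ℕ ⊕ ℕ → MeasurableSpace Ω :=
    fun k => MeasurableSpace.comap (g k) inferInstance with hmS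
  have hele : ∀ k, mS k ≤ ‹MeasurableSpace Ω› := fun k => (hgmeas k).comap_le
  -- the filtration
  set ℱ : Filtration ℕ ‹MeasurableSpace Ω› :=
    { seq := fun n => ⨆ k ∈ {k : ℕ ⊕ ℕ | Sum.elim id id k < n}, mS k
      mono' := by
        intro a b hab
        exact biSup_mono fun k hk => lt_of_lt_of_le hk (by exact_mod_cast hab)
      le' := fun n => iSup₂_le fun k _ => hele k } with hℱ
  have hℱn : ∀ n, ℱ n = ⨆ k ∈ {k : ℕ ⊕ ℕ | Sum.elim id id k < n}, mS k := fun n => rfl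
  have hmSle : ∀ {k : ℕ ⊕ ℕ} {n : ℕ}, Sum.elim id id k < n → mS k ≤ ℱ n := by
    intro k n hk
    rw [hℱn]
    exact le_biSup mS hk
  -- measurability of the increments
  have hxi_m1 : ∀ n, Measurable[mS (Sum.inl n) ⊔ mS (Sum.inr n)] (xiF c J U n) := by
    intro n
    have hJm : Measurable[mS (Sum.inl n) ⊔ mS (Sum.inr n)] (fun ω => (J n ω : ℝ)) :=
      (measurable_iff_comap_le.2 le_rfl).mono le_sup_left le_rfl
    have hUm : Measurable[mS (Sum.inl n) ⊔ mS (Sum.inr n)] (U n) :=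
      (measurable_iff_comap_le.2 le_rfl).mono le_sup_right le_rfl
    have heq : xiF c J U n = fun ω =>
        if (J n ω : ℝ) = 0 ∧ U n ω < c then 1 else if (J n ω : ℝ) = 1 then -1 else 0 := by
      funext ω
      simp [xiF, Nat.cast_eq_zero, Nat.cast_eq_one]
    rw [heq]
    refine Measurable.ite ?_ measurable_const (Measurable.ite ?_ measurable_const
      measurable_const)
    · have : {ω | (J n ω : ℝ) = 0 ∧ U n ω < c} =
          (fun ω => (J n ω : ℝ)) ⁻¹' {0} ∩ (U n) ⁻¹' (Set.Iio c) := by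
        ext ω; simp
      rw [this]
      exact (hJm (measurableSet_singleton 0)).inter (hUm measurableSet_Iio)
    · exact hJm (measurableSet_singleton 1)
  have hxiFn : ∀ {i n : ℕ}, i < n → Measurable[ℱ n] (xiF c J U i) := by
    intro i n hi
    refine (hxi_m1 i).mono ?_ le_rfl
    refine sup_le (hmSle ?_) (hmSle ?_) <;> simpa
  have hSFn : ∀ {k n : ℕ}, k ≤ n → Measurable[ℱ n] (SF c J U k) := by
    intro k n hk
    have : SF c J U k = fun ω => ∑ i ∈ Finset.range k, xiF c J U i ω := rfl
    rw [this]
    exact Finset.measurable_sum _ fun i hi =>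
      hxiFn (lt_of_lt_of_le (Finset.mem_range.1 hi) hk)
  have hximeas : ∀ n, Measurable (xiF c J U n) :=
    fun n => (hxi_m1 n).mono (sup_le (hele _) (hele _)) le_rfl
  -- integrability helper
  have hint : ∀ (f : Ω → ℝ) (C : ℝ), Measurable f → (∀ ω, |f ω| ≤ C) → Integrable f μ := by
    intro f C hf hC
    exact ⟨hf.aestronglyMeasurable,
      HasFiniteIntegral.of_bounded (C := C) (ae_of_all _ fun ω => by
        simpa [Real.norm_eq_abs] using hC ω)⟩
  -- expectation of the increments is zero
  have hExi : ∀ n, ∫ ω, xiF c J U n ω ∂μ = 0 := by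
    intro n
    set P : Set Ω := (fun ω => (J n ω : ℝ)) ⁻¹' {0} ∩ (U n) ⁻¹' (Set.Iio c) with hP
    set Q : Set Ω := (fun ω => (J n ω : ℝ)) ⁻¹' {1} with hQ
    have hPmeas : MeasurableSet P :=
      ((measurable_from_top.comp (hJmeas n)) (measurableSet_singleton 0)).inter
        ((hUmeas n) measurableSet_Iio)
    have hQmeas : MeasurableSet Q :=
      (measurable_from_top.comp (hJmeas n)) (measurableSet_singleton 1)
    have hxieq : xiF c J U n = fun ω =>
        Set.indicator P (1 : Ω → ℝ) ω - Set.indicator Q (1 : Ω → ℝ) ω := by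
      funext ω
      have hJ := hJval n ω
      by_cases h0 : J n ω = 0
      · by_cases hU : U n ω < c
        · have hPω : ω ∈ P := by simp [hP, h0, hU]
          have hQω : ω ∉ Q := by simp [hQ, h0]
          simp [xiF, h0, hU, Set.indicator_of_mem hPω, Set.indicator_of_notMem hQω]
        · have hPω : ω ∉ P := by simp [hP, hU]
          have hQω : ω ∉ Q := by simp [hQ, h0]
          have h1 : J n ω ≠ 1 := by omega
          simp [xiF, hU, h1, Set.indicator_of_notMem hPω, Set.indicator_of_notMem hQω]
      · have h1 : J n ω = 1 := by omega
        have hPω : ω ∉ P := by simp [hP, h1]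
        have hQω : ω ∈ Q := by simp [hQ, h1]
        simp [xiF, h0, h1, Set.indicator_of_notMem hPω, Set.indicator_of_mem hQω]
    have hμQ : μ Q = ENNReal.ofReal q := by
      have : Q = {ω | J n ω = 1} := by ext ω; simp [hQ, Nat.cast_eq_one]
      rw [this]; exact hJdist n
    have hμJ0 : μ ((fun ω => (J n ω : ℝ)) ⁻¹' {0}) = ENNReal.ofReal p := by
      have hcompl : (fun ω => (J n ω : ℝ)) ⁻¹' {0} = {ω | J n ω = 1}ᶜ := by
        ext ω
        have := hJval n ω
        simp only [Set.mem_preimage, Set.mem_singleton_iff, Nat.cast_eq_zero, Set.mem_compl_iff,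
          Set.mem_setOf_eq]
        omega
      have hmeas1 : MeasurableSet {ω | J n ω = 1} := by
        have : {ω | J n ω = 1} = (J n) ⁻¹' {1} := rfl
        rw [this]; exact (hJmeas n) (measurableSet_singleton 1)
      rw [hcompl, measure_compl hmeas1 (measure_ne_top μ _), hJdist n, measure_univ]
      rw [← ENNReal.ofReal_one, ← ENNReal.ofReal_sub _ (le_of_lt hq0)]
      congr 1
      rw [hq]; ring
    have hμU : μ ((U n) ⁻¹' (Set.Iio c)) = ENNReal.ofReal c := by
      have := hUdist n
      have hmap : μ ((U n) ⁻¹' (Set.Iio c)) = (Measure.map (U n) μ) (Set.Iio c) :=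
        (Measure.map_apply (hUmeas n) measurableSet_Iio).symm
      rw [hmap, this, Measure.restrict_apply measurableSet_Iio]
      have hIcc : Set.Iio c ∩ Set.Icc (0 : ℝ) 1 = Set.Ico 0 c := by
        ext x
        simp only [Set.mem_inter_iff, Set.mem_Iio, Set.mem_Icc, Set.mem_Ico]
        constructor
        · rintro ⟨h1, h2, h3⟩; exact ⟨h2, h1⟩
        · rintro ⟨h1, h2⟩; exact ⟨h2, h1, le_trans (le_of_lt h2) hc1⟩
      rw [hIcc, Real.volume_Ico, sub_zero]
    have hμP : μ P = ENNReal.ofReal q := by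
      have hIndJU : IndepFun (fun ω => (J n ω : ℝ)) (U n) μ :=
        hindep.indepFun (show (Sum.inl n : ℕ ⊕ ℕ) ≠ Sum.inr n by simp)
      have := hIndJU.measure_inter_preimage_eq_mul {0} (Set.Iio c)
        (measurableSet_singleton 0) measurableSet_Iio
      rw [hP, this, hμJ0, hμU, ← ENNReal.ofReal_mul (le_of_lt hp0)]
      congr 1
      rw [hc, mul_comm]
      exact div_mul_cancel₀ q (ne_of_gt hp0)
    rw [hxieq]
    show ∫ ω, (P.indicator (1 : Ω → ℝ) ω - Q.indicator (1 : Ω → ℝ) ω) ∂μ = 0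
    have hiP : Integrable (P.indicator (1 : Ω → ℝ)) μ :=
      (integrable_const (1 : ℝ)).indicator hPmeas
    have hiQ : Integrable (Q.indicator (1 : Ω → ℝ)) μ :=
      (integrable_const (1 : ℝ)).indicator hQmeas
    rw [integral_sub hiP hiQ]
    rw [integral_indicator_one hPmeas, integral_indicator_one hQmeas, measureReal_def, measureReal_def, hμP, hμQ]
    ring
  -- now fix the level M
  rw [ae_all_iff]
  intro M
  -- the region where the walk has not yet gone below -M
  set AA : ℕ → Set Ω := fun i => {ω | ∀ k ≤ i, -(M : ℝ) < SF c J U k ω} with hAA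
  have hAAmeas : ∀ i, MeasurableSet[ℱ i] (AA i) := by
    intro i
    have : AA i = ⋂ k ∈ Finset.range (i + 1), (SF c J U k) ⁻¹' (Set.Ioi (-(M : ℝ))) := by
      ext ω
      simp [hAA, Nat.lt_succ_iff]
    rw [this]
    exact MeasurableSet.biInter (Finset.range (i + 1)).countable_toSet fun k hk =>
      (hSFn (Nat.lt_succ_iff.1 (Finset.mem_range.1 hk))) measurableSet_Ioi
  have hAAmono : ∀ {i k : ℕ} {ω : Ω}, k ≤ i → ω ∈ AA i → ω ∈ AA k := by
    intro i k ω hki hω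
    intro j hj
    exact hω j (hj.trans hki)
  -- the stopped martingale
  set ind : ℕ → Ω → ℝ := fun i => Set.indicator (AA i) (1 : Ω → ℝ) with hind
  set Y : ℕ → Ω → ℝ := fun n ω => ∑ i ∈ Finset.range n, ind i ω * xiF c J U i ω with hY
  have hY_succ : ∀ n ω, Y (n + 1) ω = Y n ω + ind n ω * xiF c J U n ω := by
    intro n ω
    exact Finset.sum_range_succ _ _
  have hind_meas : ∀ i, Measurable[ℱ i] (ind i) := by
    intro i
    exact measurable_const.indicator (hAAmeas i)
  have hind_abs : ∀ i ω, |ind i ω * xiF c J U i ω| ≤ 1 := by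
    intro i ω
    rw [abs_mul]
    have h1 : |ind i ω| ≤ 1 := by
      rw [hind]
      by_cases h : ω ∈ AA i <;> simp [Set.indicator_of_mem, Set.indicator_of_notMem, h]
    calc |ind i ω| * |xiF c J U i ω| ≤ 1 * 1 :=
          mul_le_mul h1 (xiF_abs_le c J U i ω) (abs_nonneg _) zero_le_one
      _ = 1 := one_mul 1
  have hYmeasF : ∀ n, Measurable[ℱ n] (Y n) := by
    intro n
    have : Y n = fun ω => ∑ i ∈ Finset.range n, ind i ω * xiF c J U i ω := rfl
    rw [this]
    refine Finset.measurable_sum _ fun i hi => Measurable.mul ?_ (hxiFn (Finset.mem_range.1 hi))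
    exact (hind_meas i).mono (ℱ.mono (le_of_lt (Finset.mem_range.1 hi))) le_rfl
  have hYmeas : ∀ n, Measurable (Y n) := fun n => (hYmeasF n).mono (ℱ.le n) le_rfl
  have hYabs : ∀ n ω, |Y n ω| ≤ n := by
    intro n ω
    calc |Y n ω| ≤ ∑ i ∈ Finset.range n, |ind i ω * xiF c J U i ω| :=
          Finset.abs_sum_le_sum_abs _ _
      _ ≤ ∑ i ∈ Finset.range n, 1 := Finset.sum_le_sum fun i _ => hind_abs i ω
      _ = n := by simp
  have hYint : ∀ n, Integrable (Y n) μ := fun n => hint (Y n) n (hYmeas n) (hYabs n)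
  have hprodint : ∀ i, Integrable (fun ω => ind i ω * xiF c J U i ω) μ := by
    intro i
    refine hint _ 1 ?_ (hind_abs i)
    exact ((hind_meas i).mono (ℱ.le i) le_rfl).mul (hximeas i)
  -- conditional expectation of the increments vanishes
  have hcondzero : ∀ i, μ[fun ω => ind i ω * xiF c J U i ω | ℱ i] =ᵐ[μ] 0 := by
    intro i
    have hIndep : Indep (mS (Sum.inl i) ⊔ mS (Sum.inr i)) (ℱ i) μ := by
      have hd : Disjoint ({Sum.inl i, Sum.inr i} : Set (ℕ ⊕ ℕ)) {k : ℕ ⊕ ℕ | Sum.elim id id k < i} := by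
        rw [Set.disjoint_left]
        rintro k (rfl | rfl) <;> simp
      have := indep_iSup_of_disjoint hele hii hd
      have hpair : (⨆ k ∈ ({Sum.inl i, Sum.inr i} : Set (ℕ ⊕ ℕ)), mS k)
          = mS (Sum.inl i) ⊔ mS (Sum.inr i) := by
        rw [iSup_insert, iSup_singleton]
      rw [hpair] at this
      rw [hℱn]
      exact this
    have hcond : μ[xiF c J U i | ℱ i] =ᵐ[μ] fun _ => μ[xiF c J U i] :=
      condExp_indep_eq (sup_le (hele _) (hele _)) (ℱ.le i)
        ((hxi_m1 i).stronglyMeasurable) hIndep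
    have hxiint : Integrable (xiF c J U i) μ := hint _ 1 (hximeas i) (xiF_abs_le c J U i)
    have hpull : μ[fun ω => ind i ω * xiF c J U i ω | ℱ i]
        =ᵐ[μ] (ind i) * μ[xiF c J U i | ℱ i] := by
      have := condExp_mul_of_stronglyMeasurable_left (μ := μ) (m := ℱ i)
        ((hind_meas i).stronglyMeasurable) (hprodint i) hxiint
      exact this
    refine hpull.trans ?_
    filter_upwards [hcond] with ω hω
    simp only [Pi.mul_apply, hω, hExi i, Pi.zero_apply, integral_zero]
    ring
  -- `Y` is a martingale
  have hmart : Martingale Y ℱ μ := by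
    refine martingale_nat (fun n => (hYmeasF n).stronglyMeasurable) hYint ?_
    intro n
    have h1 : μ[Y (n + 1) | ℱ n]
        =ᵐ[μ] μ[Y n | ℱ n] + μ[fun ω => ind n ω * xiF c J U n ω | ℱ n] := by
      have heq : Y (n + 1) = fun ω => Y n ω + ind n ω * xiF c J U n ω := by
        funext ω; exact hY_succ n ω
      rw [heq]
      exact condExp_add (hYint n) (hprodint n) _
    have h2 : μ[Y n | ℱ n] = Y n :=
      condExp_of_stronglyMeasurable (ℱ.le n) (hYmeasF n).stronglyMeasurable (hYint n)
    refine EventuallyEq.symm (h1.trans ?_)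
    filter_upwards [hcondzero n] with ω hω2
    simp only [Pi.add_apply, hω2, Pi.zero_apply, add_zero]
    exact congrFun h2 ω
  -- lower bound for `Y`
  have hYeqS : ∀ n ω, (∀ i, i < n → ω ∈ AA i) → Y n ω = SF c J U n ω := by
    intro n
    induction n with
    | zero => intro ω _; simp [hY, SF]
    | succ n ih =>
        intro ω hω
        have hiω : ind n ω = 1 := Set.indicator_of_mem (hω n (Nat.lt_succ_self n)) _
        rw [hY_succ, SF_succ, ih ω fun i hi => hω i (hi.trans (Nat.lt_succ_self n)), hiω]
        ring
  have hYlb : ∀ n ω, -((M : ℝ) + 1) ≤ Y n ω := by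
    intro n ω
    induction n with
    | zero =>
        have h0 : Y 0 ω = 0 := by simp [hY]
        have hM : (0 : ℝ) ≤ (M : ℝ) := Nat.cast_nonneg M
        rw [h0]; linarith
    | succ n ih =>
        by_cases hA : ω ∈ AA n
        · have hYS : Y n ω = SF c J U n ω :=
            hYeqS n ω fun i hi => hAAmono (le_of_lt hi) hA
          have hSn : -(M : ℝ) < SF c J U n ω := hA n le_rfl
          have hxi : -1 ≤ xiF c J U n ω := (abs_le.1 (xiF_abs_le c J U n ω)).1
          have hiω : ind n ω = 1 := Set.indicator_of_mem hA _
          rw [hY_succ, hYS, hiω]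
          rw [one_mul]
          linarith
        · have hiω : ind n ω = 0 := Set.indicator_of_notMem hA _
          rw [hY_succ, hiω, zero_mul, add_zero]
          exact ih
  -- expectation of Y is 0, hence uniform L¹ bound
  have hEY : ∀ n, ∫ ω, Y n ω ∂μ = 0 := by
    intro n
    have : ∫ ω, Y n ω ∂μ = ∑ i ∈ Finset.range n, ∫ ω, ind i ω * xiF c J U i ω ∂μ := by
      rw [hY]
      exact integral_finset_sum _ fun i _ => hprodint i
    rw [this]
    refine Finset.sum_eq_zero fun i _ => ?_
    have h1 : ∫ ω, (μ[fun ω => ind i ω * xiF c J U i ω | ℱ i]) ω ∂μ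
        = ∫ ω, ind i ω * xiF c J U i ω ∂μ := integral_condExp (ℱ.le i)
    rw [← h1]
    rw [integral_congr_ae (hcondzero i)]
    simp
  have hL1 : ∀ n, eLpNorm (Y n) 1 μ ≤ ENNReal.ofReal (2 * (M : ℝ) + 2) := by
    intro n
    have habs : ∀ ω, |Y n ω| ≤ Y n ω + (2 * (M : ℝ) + 2) := by
      intro ω
      rcases abs_cases (Y n ω) with ⟨h1, _⟩ | ⟨h1, _⟩
      · linarith [Nat.cast_nonneg (α := ℝ) M]
      · have := hYlb n ω
        linarith
    have hintabs : ∫ ω, |Y n ω| ∂μ ≤ 2 * (M : ℝ) + 2 := by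
      have h2 : ∫ ω, (Y n ω + (2 * (M : ℝ) + 2)) ∂μ = 2 * (M : ℝ) + 2 := by
        rw [integral_add (hYint n) (integrable_const _), hEY n, integral_const]
        simp
      calc ∫ ω, |Y n ω| ∂μ ≤ ∫ ω, (Y n ω + (2 * (M : ℝ) + 2)) ∂μ :=
            integral_mono (hYint n).abs ((hYint n).add (integrable_const _)) habs
        _ = 2 * (M : ℝ) + 2 := h2
    have heq : eLpNorm (Y n) 1 μ = ENNReal.ofReal (∫ ω, ‖Y n ω‖ ∂μ) := by
      rw [eLpNorm_one_eq_lintegral_enorm, ← ofReal_integral_norm_eq_lintegral_enorm (hYint n)]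
    rw [heq]
    refine ENNReal.ofReal_le_ofReal ?_
    simpa [Real.norm_eq_abs] using hintabs
  -- Y converges a.e.
  have hconv : ∀ᵐ ω ∂μ, ∃ l : ℝ, Tendsto (fun n => Y n ω) atTop (nhds l) :=
    hmart.submartingale.exists_ae_tendsto_of_bdd hL1
  -- conclusion
  filter_upwards [hconv, hfreq] with ω hω hfr
  by_contra hcon
  push_neg at hcon
  have hAAall : ∀ i, ω ∈ AA i := fun i k _ => hcon k
  have hYS : ∀ n, Y n ω = SF c J U n ω := fun n => hYeqS n ω fun i _ => hAAall i
  obtain ⟨l, hl⟩ := hω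
  have hSconv : Tendsto (fun n => SF c J U n ω) atTop (nhds l) := by
    have : (fun n => SF c J U n ω) = fun n => Y n ω := by
      funext n; exact (hYS n).symm
    rw [this]; exact hl
  have hxiconv : Tendsto (fun n => xiF c J U n ω) atTop (nhds 0) := by
    have h1 : Tendsto (fun n => SF c J U (n + 1) ω) atTop (nhds l) :=
      hSconv.comp (tendsto_add_atTop_nat 1)
    have h2 : (fun n => xiF c J U n ω) = fun n => SF c J U (n + 1) ω - SF c J U n ω := by
      funext n; rw [SF_succ]; ring
    rw [h2]
    simpa using h1.sub hSconv
  have hev : ∀ᶠ n in atTop, |xiF c J U n ω| < 1 / 2 := by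
    have := hxiconv.eventually (eventually_abs_sub_lt 0 (by norm_num : (0:ℝ) < 1/2))
    simpa using this
  obtain ⟨n, hn1, hn2⟩ := (hfr.and_eventually hev).exists
  have : xiF c J U n ω = -1 := by
    unfold xiF
    rw [if_neg (by simp [hn1]), if_pos hn1]
  rw [this] at hn2
  norm_num at hn2

end Prob

end GMSAux

/-- **GMS model, recurrence of `L` and extinction of subcritical species.**
Almost surely `L_n = 0` infinitely often; consequently every species born with
fitness below the critical value `f_c = q/p` eventually becomes extinct. -/
theorem gms_L_recurrent_extinction
    {Ω : Type*} [MeasurableSpace Ω] (μ : Measure Ω) [IsProbabilityMeasure μ]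
    (p q : ℝ) (hp : 1 / 2 < p) (hp1 : p < 1) (hq : q = 1 - p)
    (J : ℕ → Ω → ℕ) (U : ℕ → Ω → ℝ)
    (hJmeas : ∀ n, Measurable (J n))
    (hUmeas : ∀ n, Measurable (U n))
    (hJval : ∀ n ω, J n ω ≤ 1)
    (hJdist : ∀ n, μ {ω | J n ω = 1} = ENNReal.ofReal q)
    (hUdist : ∀ n, Measure.map (U n) μ = volume.restrict (Set.Icc (0 : ℝ) 1))
    (hindep : iIndepFun
      (Sum.elim (fun n ω => (J n ω : ℝ)) U) μ)
    (L : ℕ → Ω → ℕ)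
    (hL0 : ∀ ω, L 0 ω = 0)
    (hL : ∀ n ω, L (n + 1) ω =
      if J n ω = 0 ∧ U n ω < q / p then L n ω + 1
      else if J n ω = 1 ∧ 0 < L n ω then L n ω - 1 else L n ω)
    :
    ∀ᵐ ω ∂μ,
      {n : ℕ | L n ω = 0}.Infinite ∧
      ∀ m : ℕ, J m ω = 0 → U m ω < q / p → ∃ n > m, L n ω = 0 := by
  have hfreq := GMSAux.ae_frequently_J_one μ p q hp hp1 hq J U hJmeas hJdist hindep
  have hub := GMSAux.ae_unbounded_below μ p q hp hp1 hq J U hJmeas hUmeas hJval hJdist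
    hUdist hindep hfreq
  filter_upwards [hub] with ω hω
  have hinf := GMSAux.det_infinite (q / p) J U L hJval hL0 hL ω hω
  refine ⟨hinf, ?_⟩
  intro m _ _
  by_contra hcon
  push_neg at hcon
  have hsub : {n : ℕ | L n ω = 0} ⊆ Set.Iic m := by
    intro n hn
    by_contra hgt
    rw [Set.mem_Iic, not_le] at hgt
    exact hcon n hgt hn
  exact hinf (Set.Finite.subset (Set.finite_Iic m) hsub)
end

section
/- For every ε > 0, almost surely 0 ≤ limsup_{n→∞} (B_n − R_n)/n^{1/2+ε} ≤ 2/q. -/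
open MeasureTheory ProbabilityTheory Filter

lemma gms_exp_le_quad {x : ℝ} (hx : |x| ≤ 1) : Real.exp x ≤ 1 + x + x ^ 2 := by
  have h := Real.exp_bound hx (n := 2) (by norm_num)
  have hs : ∑ i ∈ Finset.range 2, x ^ i / i.factorial = 1 + x := by
    simp [Finset.sum_range_succ]
  rw [hs] at h
  have h2 := (abs_le.mp h).2
  have hx2 : |x| ^ 2 = x ^ 2 := sq_abs x
  norm_num at h2
  nlinarith [h2]

lemma gms_pow_le_fact_mul_exp (k : ℕ) {x : ℝ} (hx : 0 ≤ x) :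
    x ^ k ≤ k.factorial * Real.exp x := by
  have h := Real.sum_le_exp_of_nonneg hx (k + 1)
  have h1 : x ^ k / k.factorial ≤ Real.exp x :=
    le_trans (Finset.single_le_sum (f := fun i => x ^ i / i.factorial)
      (fun i _ => by positivity) (Finset.self_mem_range_succ k)) h
  have h2 : (0:ℝ) < k.factorial := by positivity
  rw [div_le_iff₀ h2] at h1
  linarith [h1]


set_option maxHeartbeats 2000000 in
/-- **GMS model (Guiol–Machado–Schinazi bound).**
For every `ε > 0`, almost surely `0 ≤ limsup (B_n − R_n)/n^{1/2+ε} ≤ 2/q`. -/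
theorem gms_limsup_polynomial_bound
    {Ω : Type*} [MeasurableSpace Ω] (μ : Measure Ω) [IsProbabilityMeasure μ]
    (p q : ℝ) (hp : 1 / 2 < p) (hp1 : p < 1) (hq : q = 1 - p)
    (J : ℕ → Ω → ℕ) (U : ℕ → Ω → ℝ)
    (hJmeas : ∀ n, Measurable (J n))
    (hUmeas : ∀ n, Measurable (U n))
    (hJval : ∀ n ω, J n ω ≤ 1)
    (hJdist : ∀ n, μ {ω | J n ω = 1} = ENNReal.ofReal q)
    (hUdist : ∀ n, Measure.map (U n) μ = volume.restrict (Set.Icc (0 : ℝ) 1))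
    (hindep : iIndepFun
      (Sum.elim (fun n ω => (J n ω : ℝ)) U) μ)
    (X L : ℕ → Ω → ℕ)
    (hX0 : ∀ ω, X 0 ω = 0)
    (hX : ∀ n ω, X (n + 1) ω = X n ω + (1 - J n ω) - (if X n ω = 0 then 0 else J n ω))
    (hL0 : ∀ ω, L 0 ω = 0)
    (hL : ∀ n ω, L (n + 1) ω =
      if J n ω = 0 ∧ U n ω < q / p then L n ω + 1
      else if J n ω = 1 ∧ 0 < L n ω then L n ω - 1 else L n ω)
    (B : ℕ → Ω → ℕ)
    (hB : ∀ n ω, B n ω =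
      ((Finset.range n).filter (fun i => J i ω = 0 ∧ q / p ≤ U i ω)).card)
    (R : ℕ → Ω → ℤ)
    (hR : ∀ n ω, R n ω = (X n ω : ℤ) - (L n ω : ℤ)) :
    ∀ ε : ℝ, 0 < ε →
      ∀ᵐ ω ∂μ,
        0 ≤ Filter.limsup
            (fun n : ℕ => ((B n ω : ℝ) - (R n ω : ℝ)) / (n : ℝ) ^ ((1 : ℝ) / 2 + ε))
            Filter.atTop ∧
        Filter.limsup
            (fun n : ℕ => ((B n ω : ℝ) - (R n ω : ℝ)) / (n : ℝ) ^ ((1 : ℝ) / 2 + ε))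
            Filter.atTop ≤ 2 / q := by
  intro ε hε
  have hp0 : (0:ℝ) < p := by linarith
  have hq0 : (0:ℝ) < q := by rw [hq]; linarith
  have hq2 : q ≤ 1/2 := by rw [hq]; linarith
  have hc0 : 0 < q / p := div_pos hq0 hp0
  have hc1 : q / p < 1 := (div_lt_one hp0).mpr (by rw [hq]; linarith)
  have hJ01 : ∀ n ω, J n ω = 0 ∨ J n ω = 1 := fun n ω =>
    Nat.le_one_iff_eq_zero_or_eq_one.mp (hJval n ω)
  obtain ⟨ξ, hξ⟩ : ∃ f : ℕ → Ω → ℝ, f = fun i ω =>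
      (if (J i ω : ℝ) = 0 ∧ U i ω < q / p then 1 else 0)
        - (if (J i ω : ℝ) = 1 then 1 else 0) := ⟨_, rfl⟩
  have hJcmeas : ∀ i, Measurable (fun ω => (J i ω : ℝ)) := fun i =>
    measurable_from_top.comp (hJmeas i)
  have hAmeas : ∀ i, MeasurableSet {ω | (J i ω : ℝ) = 0 ∧ U i ω < q / p} := by
    intro i
    have : {ω | (J i ω : ℝ) = 0 ∧ U i ω < q / p}
        = (fun ω => (J i ω : ℝ)) ⁻¹' {0} ∩ (U i) ⁻¹' (Set.Iio (q/p)) := rfl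
    rw [this]
    exact ((hJcmeas i) (measurableSet_singleton 0)).inter ((hUmeas i) measurableSet_Iio)
  have hBmeas : ∀ i, MeasurableSet {ω | (J i ω : ℝ) = 1} := fun i =>
    (hJcmeas i) (measurableSet_singleton 1)
  have hξmeas : ∀ i, Measurable (ξ i) := by
    intro i
    rw [hξ]
    exact Measurable.sub
      (Measurable.ite (hAmeas i) measurable_const measurable_const)
      (Measurable.ite (hBmeas i) measurable_const measurable_const)
  -- distribution of the "1" atom
  have hBdist : ∀ i, μ {ω | (J i ω : ℝ) = 1} = ENNReal.ofReal q := by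
    intro i
    have : {ω | (J i ω : ℝ) = 1} = {ω | J i ω = 1} := by
      ext ω; simp [Nat.cast_eq_one]
    rw [this, hJdist]
  have hJ0dist : ∀ i, μ {ω | (J i ω : ℝ) = 0} = ENNReal.ofReal p := by
    intro i
    have h1 : {ω | (J i ω : ℝ) = 0} = {ω | J i ω = 1}ᶜ := by
      ext ω
      simp only [Set.mem_setOf_eq, Set.mem_compl_iff, Nat.cast_eq_zero]
      rcases hJ01 i ω with h | h <;> simp [h]
    have h2 : MeasurableSet {ω | J i ω = 1} := (hJmeas i) (measurableSet_singleton 1)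
    rw [h1, measure_compl h2 (measure_ne_top μ _), hJdist, measure_univ,
      ← ENNReal.ofReal_one, ← ENNReal.ofReal_sub _ hq0.le]
    rw [hq]; norm_num
  have hUdist' : ∀ i, μ ((U i) ⁻¹' (Set.Iio (q/p))) = ENNReal.ofReal (q/p) := by
    intro i
    rw [← Measure.map_apply (hUmeas i) measurableSet_Iio, hUdist,
      Measure.restrict_apply measurableSet_Iio]
    have : Set.Iio (q/p) ∩ Set.Icc (0:ℝ) 1 = Set.Ico 0 (q/p) := by
      ext x
      simp only [Set.mem_inter_iff, Set.mem_Iio, Set.mem_Icc, Set.mem_Ico]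
      constructor
      · rintro ⟨h1, h2, h3⟩; exact ⟨h2, h1⟩
      · rintro ⟨h1, h2⟩; exact ⟨h2, h1, by linarith⟩
    rw [this, Real.volume_Ico]
    norm_num
  have hAdist : ∀ i, μ {ω | (J i ω : ℝ) = 0 ∧ U i ω < q / p} = ENNReal.ofReal q := by
    intro i
    have hJU : IndepFun (fun ω => (J i ω : ℝ)) (U i) μ :=
      hindep.indepFun (show (Sum.inl i : ℕ ⊕ ℕ) ≠ Sum.inr i by simp)
    have : {ω | (J i ω : ℝ) = 0 ∧ U i ω < q / p}
        = (fun ω => (J i ω : ℝ)) ⁻¹' {0} ∩ (U i) ⁻¹' (Set.Iio (q/p)) := rfl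
    rw [this, hJU.measure_inter_preimage_eq_mul _ _ (measurableSet_singleton 0)
      measurableSet_Iio]
    have h0 : (fun ω => (J i ω : ℝ)) ⁻¹' {0} = {ω | (J i ω : ℝ) = 0} := rfl
    rw [h0, hJ0dist i, hUdist' i, ← ENNReal.ofReal_mul hp0.le]
    congr 1
    field_simp
  -- mgf computation
  have hmgf : ∀ (i : ℕ) (t : ℝ),
      mgf (ξ i) μ t = q * Real.exp t + q * Real.exp (-t) + (1 - 2*q) := by
    intro i t
    have hptw : ∀ ω, Real.exp (t * ξ i ω)
        = Set.indicator {ω | (J i ω : ℝ) = 0 ∧ U i ω < q / p} (fun _ => Real.exp t - 1) ω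
          + Set.indicator {ω | (J i ω : ℝ) = 1} (fun _ => Real.exp (-t) - 1) ω + 1 := by
      intro ω
      rcases hJ01 i ω with h0 | h1
      · by_cases hu : U i ω < q / p
        · simp [hξ, Set.indicator_apply, h0, hu]
        · simp [hξ, Set.indicator_apply, h0, hu]
      · simp [hξ, Set.indicator_apply, h1, mul_neg]
    rw [mgf]
    rw [integral_congr_ae (Filter.Eventually.of_forall hptw)]
    have i1 : Integrable
        ({ω | (J i ω : ℝ) = 0 ∧ U i ω < q / p}.indicator fun _ => Real.exp t - 1) μ :=
      (integrable_const (Real.exp t - 1)).indicator (hAmeas i)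
    have i2 : Integrable
        ({ω | (J i ω : ℝ) = 1}.indicator fun _ => Real.exp (-t) - 1) μ :=
      (integrable_const (Real.exp (-t) - 1)).indicator (hBmeas i)
    have i12 : Integrable (fun a =>
        {ω | (J i ω : ℝ) = 0 ∧ U i ω < q / p}.indicator (fun _ => Real.exp t - 1) a
          + {ω | (J i ω : ℝ) = 1}.indicator (fun _ => Real.exp (-t) - 1) a) μ := i1.add i2
    rw [integral_add i12 (integrable_const (1:ℝ)),
      integral_add i1 i2,
      integral_indicator_const _ (hAmeas i), integral_indicator_const _ (hBmeas i),
      integral_const, measureReal_def, measureReal_def, measureReal_def, hAdist i, hBdist i, measure_univ]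
    simp only [ENNReal.toReal_ofReal hq0.le, ENNReal.toReal_one, smul_eq_mul, one_smul]
    ring
  -- independence of partial sums and the next step
  have hSind : ∀ n : ℕ, IndepFun (fun ω => ∑ i ∈ Finset.range n, ξ i ω) (ξ n) μ := by
    intro n
    classical
    have hgmeas : ∀ i : ℕ ⊕ ℕ, Measurable ((Sum.elim (fun k ω => (J k ω : ℝ)) U) i) := by
      rintro (i | i)
      · exact hJcmeas i
      · exact hUmeas i
    set S : Finset (ℕ ⊕ ℕ) :=
      ((Finset.range n).image Sum.inl) ∪ ((Finset.range n).image Sum.inr) with hS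
    set T : Finset (ℕ ⊕ ℕ) := {Sum.inl n, Sum.inr n} with hT
    have hdisj : Disjoint S T := by
      rw [Finset.disjoint_left]
      intro a haS haT
      simp only [hS, hT, Finset.mem_union, Finset.mem_image, Finset.mem_range,
        Finset.mem_insert, Finset.mem_singleton] at haS haT
      rcases haT with rfl | rfl <;>
        rcases haS with ⟨i, hi, h⟩ | ⟨i, hi, h⟩ <;> simp_all
    have hbase := hindep.indepFun_finset S T hdisj hgmeas
    have hmem1 : ∀ i ∈ Finset.range n, Sum.inl i ∈ S := by
      intro i hi
      rw [hS, Finset.mem_union]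
      exact Or.inl (Finset.mem_image_of_mem _ hi)
    have hmem2 : ∀ i ∈ Finset.range n, Sum.inr i ∈ S := by
      intro i hi
      rw [hS, Finset.mem_union]
      exact Or.inr (Finset.mem_image_of_mem _ hi)
    have hmemT1 : (Sum.inl n : ℕ ⊕ ℕ) ∈ T := by rw [hT]; exact Finset.mem_insert_self _ _
    have hmemT2 : (Sum.inr n : ℕ ⊕ ℕ) ∈ T := by
      rw [hT]; exact Finset.mem_insert_of_mem (Finset.mem_singleton_self _)
    obtain ⟨φ, hφdef⟩ : ∃ φ : ({x // x ∈ S} → ℝ) → ℝ, φ = fun v =>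
        ∑ i ∈ (Finset.range n).attach,
          ((if v ⟨Sum.inl i.1, hmem1 i.1 i.2⟩ = 0 ∧ v ⟨Sum.inr i.1, hmem2 i.1 i.2⟩ < q / p
              then (1:ℝ) else 0)
            - (if v ⟨Sum.inl i.1, hmem1 i.1 i.2⟩ = 1 then 1 else 0)) := ⟨_, rfl⟩
    obtain ⟨ψ, hψdef⟩ : ∃ ψ : ({x // x ∈ T} → ℝ) → ℝ, ψ = fun v =>
        (if v ⟨Sum.inl n, hmemT1⟩ = 0 ∧ v ⟨Sum.inr n, hmemT2⟩ < q / p then (1:ℝ) else 0)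
          - (if v ⟨Sum.inl n, hmemT1⟩ = 1 then 1 else 0) := ⟨_, rfl⟩
    have hφmeas : Measurable φ := by
      rw [hφdef]
      apply Finset.measurable_sum
      intro i _
      have e1 : Measurable fun v : {x // x ∈ S} → ℝ => v ⟨Sum.inl i.1, hmem1 i.1 i.2⟩ :=
        measurable_pi_apply _
      have e2 : Measurable fun v : {x // x ∈ S} → ℝ => v ⟨Sum.inr i.1, hmem2 i.1 i.2⟩ :=
        measurable_pi_apply _
      exact Measurable.sub
        (Measurable.ite ((e1 (measurableSet_singleton (0:ℝ))).inter (e2 measurableSet_Iio))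
          measurable_const measurable_const)
        (Measurable.ite (e1 (measurableSet_singleton (1:ℝ)))
          measurable_const measurable_const)
    have hψmeas : Measurable ψ := by
      rw [hψdef]
      have e1 : Measurable fun v : {x // x ∈ T} → ℝ => v ⟨Sum.inl n, hmemT1⟩ :=
        measurable_pi_apply _
      have e2 : Measurable fun v : {x // x ∈ T} → ℝ => v ⟨Sum.inr n, hmemT2⟩ :=
        measurable_pi_apply _
      exact Measurable.sub
        (Measurable.ite ((e1 (measurableSet_singleton (0:ℝ))).inter (e2 measurableSet_Iio))
          measurable_const measurable_const)
        (Measurable.ite (e1 (measurableSet_singleton (1:ℝ)))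
          measurable_const measurable_const)
    have key := hbase.comp hφmeas hψmeas
    have h1 : φ ∘ (fun a (i : {x // x ∈ S}) => Sum.elim (fun k ω => (J k ω : ℝ)) U i.1 a)
        = fun ω => ∑ i ∈ Finset.range n, ξ i ω := by
      funext ω
      rw [Function.comp_apply, hφdef]
      rw [← Finset.sum_attach (Finset.range n) (fun i => ξ i ω)]
      apply Finset.sum_congr rfl
      intro i _
      simp only [Sum.elim_inl, Sum.elim_inr, hξ]
      congr
    have h2 : ψ ∘ (fun a (i : {x // x ∈ T}) => Sum.elim (fun k ω => (J k ω : ℝ)) U i.1 a)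
        = ξ n := by
      funext ω
      rw [Function.comp_apply, hψdef]
      simp only [Sum.elim_inl, Sum.elim_inr, hξ]
      congr
    rw [h1, h2] at key
    exact key
  have hmgfnn : ∀ t : ℝ, 0 ≤ q * Real.exp t + q * Real.exp (-t) + (1 - 2*q) := by
    intro t
    have h := mgf_nonneg (X := ξ 0) (μ := μ) (t := t)
    rwa [hmgf 0 t] at h
  have hmgfle : ∀ t : ℝ, |t| ≤ 1 →
      q * Real.exp t + q * Real.exp (-t) + (1 - 2*q) ≤ Real.exp (t^2) := by
    intro t ht
    have h1 := gms_exp_le_quad ht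
    have h2 := gms_exp_le_quad (x := -t) (by rwa [abs_neg])
    have h3 : 1 + t^2 ≤ Real.exp (t^2) := by
      have := Real.add_one_le_exp (t^2); linarith
    have ht2 : 0 ≤ t^2 := sq_nonneg t
    nlinarith [Real.exp_pos t, Real.exp_pos (-t)]
  have hmgfsum : ∀ (t : ℝ) (n : ℕ), mgf (fun ω => ∑ i ∈ Finset.range n, ξ i ω) μ t
      = (q * Real.exp t + q * Real.exp (-t) + (1 - 2*q))^n := by
    intro t n
    induction n with
    | zero => simp [mgf]
    | succ n ih =>
      have hsum : (fun ω => ∑ i ∈ Finset.range (n+1), ξ i ω)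
          = (fun ω => ∑ i ∈ Finset.range n, ξ i ω) + ξ n := by
        funext ω; simp [Finset.sum_range_succ]
      rw [hsum, (hSind n).mgf_add
        (((Finset.measurable_sum _ (fun i _ => hξmeas i)).const_mul t).exp.aestronglyMeasurable)
        (((hξmeas n).const_mul t).exp.aestronglyMeasurable), ih, hmgf, pow_succ]
  have hξbdd : ∀ (i : ℕ) (ω : Ω), |ξ i ω| ≤ 1 := by
    intro i ω; rw [hξ]
    dsimp only
    split_ifs <;> norm_num
  have hcher : ∀ (δ : ℝ), 0 < δ → ∀ n : ℕ, 1 ≤ n →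
      μ {ω | δ * (n:ℝ)^((1:ℝ)/2+ε) ≤ -∑ i ∈ Finset.range n, ξ i ω}
        ≤ ENNReal.ofReal (Real.exp 1 * Real.exp (-(δ * (n:ℝ)^ε))) := by
    intro δ hδ n hn
    have hn0 : (0:ℝ) < n := by exact_mod_cast hn
    set t : ℝ := 1 / Real.sqrt n with htdef
    have hsqrt0 : 0 < Real.sqrt n := Real.sqrt_pos.mpr hn0
    have hsqrt1 : 1 ≤ Real.sqrt n := by
      rw [show (1:ℝ) = Real.sqrt 1 by simp]
      exact Real.sqrt_le_sqrt (by exact_mod_cast hn)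
    have ht0 : 0 < t := by positivity
    have ht1 : t ≤ 1 := by rw [htdef, div_le_one hsqrt0]; exact hsqrt1
    have ht2 : t^2 = 1/(n:ℝ) := by
      rw [htdef, div_pow, one_pow, Real.sq_sqrt hn0.le]
    have hmeasS : Measurable (fun ω => -∑ i ∈ Finset.range n, ξ i ω) :=
      (Finset.measurable_sum _ (fun i _ => hξmeas i)).neg
    have hbound : ∀ ω, |∑ i ∈ Finset.range n, ξ i ω| ≤ (n:ℝ) := by
      intro ω
      calc |∑ i ∈ Finset.range n, ξ i ω| ≤ ∑ i ∈ Finset.range n, |ξ i ω| :=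
            Finset.abs_sum_le_sum_abs _ _
        _ ≤ ∑ _i ∈ Finset.range n, (1:ℝ) := Finset.sum_le_sum (fun i _ => hξbdd i ω)
        _ = n := by simp
    have hint : Integrable (fun ω => Real.exp (t * (-∑ i ∈ Finset.range n, ξ i ω))) μ := by
      apply Integrable.mono' (integrable_const (Real.exp (t * n)))
        ((hmeasS.const_mul t).exp.aestronglyMeasurable)
      apply Filter.Eventually.of_forall
      intro ω
      rw [Real.norm_eq_abs, Real.abs_exp]
      apply Real.exp_le_exp.mpr
      have h := (abs_le.mp (hbound ω)).1
      nlinarith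
    have hch := measure_ge_le_exp_mul_mgf (X := fun ω => -∑ i ∈ Finset.range n, ξ i ω)
      (μ := μ) (δ * (n:ℝ)^((1:ℝ)/2+ε)) ht0.le hint
    have hneg : mgf (fun ω => -∑ i ∈ Finset.range n, ξ i ω) μ t
        = (q * Real.exp (-t) + q * Real.exp t + (1 - 2*q))^n := by
      have he : (fun ω => -∑ i ∈ Finset.range n, ξ i ω)
          = -(fun ω => ∑ i ∈ Finset.range n, ξ i ω) := rfl
      rw [he, mgf_neg, hmgfsum (-t) n, neg_neg]
    have hM0 : 0 ≤ q * Real.exp (-t) + q * Real.exp t + (1 - 2*q) := by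
      have := hmgfnn (-t); rw [neg_neg] at this; linarith
    have hMle : (q * Real.exp (-t) + q * Real.exp t + (1 - 2*q))^n ≤ Real.exp 1 := by
      have h1 : q * Real.exp (-t) + q * Real.exp t + (1 - 2*q) ≤ Real.exp (t^2) := by
        have := hmgfle t (by rwa [abs_of_pos ht0]); linarith
      calc (q * Real.exp (-t) + q * Real.exp t + (1 - 2*q))^n
          ≤ (Real.exp (t^2))^n := pow_le_pow_left₀ hM0 h1 n
        _ = Real.exp (n * t^2) := by rw [← Real.exp_nat_mul]
        _ = Real.exp 1 := by rw [ht2]; congr 1; field_simp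
    have hrw : Real.sqrt n = (n:ℝ)^((1:ℝ)/2) := Real.sqrt_eq_rpow _
    have hta : t * (δ * (n:ℝ)^((1:ℝ)/2+ε)) = δ * (n:ℝ)^ε := by
      rw [htdef, hrw, Real.rpow_add hn0]
      have hne : (n:ℝ)^((1:ℝ)/2) ≠ 0 := (Real.rpow_pos_of_pos hn0 _).ne'
      field_simp
    calc μ {ω | δ * (n:ℝ)^((1:ℝ)/2+ε) ≤ -∑ i ∈ Finset.range n, ξ i ω}
        = ENNReal.ofReal ((μ {ω | δ * (n:ℝ)^((1:ℝ)/2+ε)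
            ≤ -∑ i ∈ Finset.range n, ξ i ω}).toReal) :=
          (ENNReal.ofReal_toReal (measure_ne_top μ _)).symm
      _ ≤ ENNReal.ofReal (Real.exp 1 * Real.exp (-(δ * (n:ℝ)^ε))) := by
          apply ENNReal.ofReal_le_ofReal
          refine hch.trans ?_
          rw [hneg]
          calc Real.exp (-t * (δ * (n:ℝ)^((1:ℝ)/2+ε)))
                * (q * Real.exp (-t) + q * Real.exp t + (1 - 2*q))^n
              ≤ Real.exp (-t * (δ * (n:ℝ)^((1:ℝ)/2+ε))) * Real.exp 1 :=
                mul_le_mul_of_nonneg_left hMle (Real.exp_pos _).le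
            _ = Real.exp 1 * Real.exp (-(δ * (n:ℝ)^ε)) := by
                rw [neg_mul, hta]; ring
  have hsummable : ∀ m : ℕ, Summable (fun n : ℕ =>
      Real.exp 1 * Real.exp (-((1/((m:ℝ)+1)) * ((n+1:ℕ):ℝ)^ε))) := by
    intro m
    have hδ0 : (0:ℝ) < 1/((m:ℝ)+1) := by positivity
    set δ : ℝ := 1/((m:ℝ)+1)
    obtain ⟨k, hk⟩ : ∃ k : ℕ, (2:ℝ) ≤ (k:ℝ) * ε := by
      obtain ⟨k, hk⟩ := exists_nat_gt ((2:ℝ)/ε)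
      refine ⟨k, ?_⟩
      rw [← div_le_iff₀ hε]
      exact hk.le
    have hC0 : (0:ℝ) < (k.factorial : ℝ) * (1/δ)^k := by positivity
    have hbase : Summable (fun n : ℕ => 1/((n+1:ℕ):ℝ)^2) := by
      have h2 : Summable (fun n : ℕ => 1/((n:ℕ):ℝ)^2) :=
        Real.summable_one_div_nat_pow.mpr one_lt_two
      exact (summable_nat_add_iff (f := fun n : ℕ => 1/((n:ℕ):ℝ)^2) 1).mpr h2
    have hg : Summable (fun n : ℕ =>
        (Real.exp 1 * ((k.factorial:ℝ) * (1/δ)^k)) * (1/((n+1:ℕ):ℝ)^2)) :=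
      hbase.mul_left _
    refine Summable.of_nonneg_of_le (fun n => by positivity) (fun n => ?_) hg
    have hx0 : (0:ℝ) < ((n+1:ℕ):ℝ) := by positivity
    have hx1 : (1:ℝ) ≤ ((n+1:ℕ):ℝ) := by exact_mod_cast Nat.one_le_iff_ne_zero.mpr (by omega)
    set x : ℝ := ((n+1:ℕ):ℝ)^ε with hxdef
    have hxpos : 0 < x := Real.rpow_pos_of_pos hx0 _
    have h1 : (δ*x)^k ≤ (k.factorial:ℝ) * Real.exp (δ*x) :=
      gms_pow_le_fact_mul_exp k (by positivity)
    have h3 : ((n+1:ℕ):ℝ)^(2:ℕ) ≤ x^k := by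
      rw [hxdef, ← Real.rpow_natCast (((n+1:ℕ):ℝ)^ε) k, ← Real.rpow_mul hx0.le,
        ← Real.rpow_natCast ((n+1:ℕ):ℝ) 2]
      apply Real.rpow_le_rpow_of_exponent_le hx1
      push_cast
      linarith
    have h4 : Real.exp (-(δ*x)) ≤ ((k.factorial:ℝ) * (1/δ)^k) * (1/((n+1:ℕ):ℝ)^2) := by
      have hd1 : (0:ℝ) < (δ*x)^k / (k.factorial:ℝ) := by positivity
      calc Real.exp (-(δ*x)) = 1/Real.exp (δ*x) := by rw [Real.exp_neg, one_div]
        _ ≤ 1/((δ*x)^k / (k.factorial:ℝ)) := by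
            apply one_div_le_one_div_of_le hd1
            rw [div_le_iff₀ (by positivity : (0:ℝ) < (k.factorial:ℝ))]
            linarith [h1]
        _ = ((k.factorial:ℝ) * (1/δ)^k) * (1/x^k) := by
            rw [one_div_div]
            rw [mul_pow]
            field_simp
            rw [← mul_pow, mul_one_div_cancel hδ0.ne', one_pow]
        _ ≤ ((k.factorial:ℝ) * (1/δ)^k) * (1/((n+1:ℕ):ℝ)^2) := by
            apply mul_le_mul_of_nonneg_left _ hC0.le
            apply one_div_le_one_div_of_le (by positivity)
            exact_mod_cast h3
    calc Real.exp 1 * Real.exp (-(δ * ((n+1:ℕ):ℝ)^ε))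
        ≤ Real.exp 1 * (((k.factorial:ℝ) * (1/δ)^k) * (1/((n+1:ℕ):ℝ)^2)) :=
          mul_le_mul_of_nonneg_left h4 (Real.exp_pos 1).le
      _ = (Real.exp 1 * ((k.factorial:ℝ) * (1/δ)^k)) * (1/((n+1:ℕ):ℝ)^2) := by ring
  have hBC : ∀ᵐ ω ∂μ, ∀ m : ℕ, ∀ᶠ n in atTop,
      ω ∉ {ω' | (1/((m:ℝ)+1)) * ((n+1:ℕ):ℝ)^((1:ℝ)/2+ε)
        ≤ -∑ i ∈ Finset.range (n+1), ξ i ω'} := by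
    rw [ae_all_iff]
    intro m
    apply MeasureTheory.ae_eventually_notMem
    have hδ0 : (0:ℝ) < 1/((m:ℝ)+1) := by positivity
    apply ne_of_lt
    calc ∑' n, μ {ω' | (1/((m:ℝ)+1)) * ((n+1:ℕ):ℝ)^((1:ℝ)/2+ε)
          ≤ -∑ i ∈ Finset.range (n+1), ξ i ω'}
        ≤ ∑' n, ENNReal.ofReal (Real.exp 1 * Real.exp (-((1/((m:ℝ)+1)) * ((n+1:ℕ):ℝ)^ε))) :=
          ENNReal.tsum_le_tsum (fun n => hcher _ hδ0 (n+1) (by omega))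
      _ = ENNReal.ofReal (∑' n, Real.exp 1 * Real.exp (-((1/((m:ℝ)+1)) * ((n+1:ℕ):ℝ)^ε))) :=
          (ENNReal.ofReal_tsum_of_nonneg (fun n => by positivity) (hsummable m)).symm
      _ < ⊤ := ENNReal.ofReal_lt_top
  have hJ01' := hJ01
  obtain ⟨ζ, hζ⟩ : ∃ f : ℕ → Ω → ℤ, f = fun i ω =>
      (if J i ω = 0 ∧ U i ω < q / p then 1 else 0) - (if J i ω = 1 then 1 else 0) := ⟨_, rfl⟩
  obtain ⟨Sz, hSz⟩ : ∃ f : ℕ → Ω → ℤ, f = fun n ω => ∑ i ∈ Finset.range n, ζ i ω := ⟨_, rfl⟩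
  obtain ⟨supN, hsupN⟩ : ∃ f : ℕ → Ω → ℕ,
      f = fun n ω => (Finset.range (n+1)).sup fun k => (- Sz k ω).toNat := ⟨_, rfl⟩
  -- L ≤ X
  have hLX : ∀ ω n, L n ω ≤ X n ω := by
    intro ω n
    induction n with
    | zero => rw [hL0, hX0]
    | succ n ih =>
      have hXr := hX n ω
      have hLr := hL n ω
      rcases hJ01 n ω with h0 | h1
      · have hXr' : X (n+1) ω = X n ω + 1 := by rw [hXr, h0]; simp
        by_cases hu : U n ω < q / p
        · rw [if_pos ⟨h0, hu⟩] at hLr; omega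
        · rw [if_neg (by simp [hu]), if_neg (by simp [h0])] at hLr; omega
      · rw [if_neg (by simp [h1])] at hLr
        have hXr' : X (n+1) ω = X n ω - (if X n ω = 0 then 0 else 1) := by
          rw [hXr, h1]; simp
        by_cases hl : 0 < L n ω
        · rw [if_pos ⟨h1, hl⟩] at hLr
          have hx : ¬ X n ω = 0 := by omega
          rw [if_neg hx] at hXr'; omega
        · rw [if_neg (fun h => hl h.2)] at hLr
          by_cases hx : X n ω = 0
          · rw [if_pos hx] at hXr'; omega
          · rw [if_neg hx] at hXr'; omega
  -- main invariant
  have hkey : ∀ ω n, (0 ≤ (B n ω : ℤ) - R n ω ∧ (B n ω : ℤ) - R n ω ≤ (L n ω : ℤ) - Sz n ω)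
      ∧ (L n ω : ℤ) - Sz n ω ≤ (supN n ω : ℤ) := by
    intro ω n
    induction n with
    | zero =>
      have hB0 : B 0 ω = 0 := by simp [hB]
      have hS0 : Sz 0 ω = 0 := by simp [hSz]
      have hR0 := hR 0 ω
      have := hL0 ω; have := hX0 ω
      have hsup0 : (0:ℤ) ≤ (supN 0 ω : ℤ) := Int.natCast_nonneg _
      omega
    | succ n ih =>
      have hXr := hX n ω
      have hLr := hL n ω
      have hRr := hR (n+1) ω
      have hRn := hR n ω
      have hLXn := hLX ω n
      have hBr : B (n+1) ω = B n ω + (if J n ω = 0 ∧ q / p ≤ U n ω then 1 else 0) := by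
        rw [hB, hB, Finset.range_add_one, Finset.filter_insert]
        split_ifs with h
        · rw [Finset.card_insert_of_notMem (by simp)]
        · rfl
      have hSzr : Sz (n+1) ω = Sz n ω + ζ n ω := by rw [hSz]; exact Finset.sum_range_succ _ n
      have hsup1 : supN n ω ≤ supN (n+1) ω := by
        simp only [hsupN]
        exact Finset.sup_mono (Finset.range_subset_range.mpr (by omega))
      have hsup2 : (- Sz (n+1) ω).toNat ≤ supN (n+1) ω := by
        simp only [hsupN]
        exact Finset.le_sup (f := fun k => (-Sz k ω).toNat) (Finset.self_mem_range_succ (n+1))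
      rcases hJ01 n ω with h0 | h1
      · have hXr' : X (n+1) ω = X n ω + 1 := by rw [hXr, h0]; simp
        by_cases hu : U n ω < q / p
        · have hz : ζ n ω = 1 := by simp [hζ, h0, hu]
          rw [if_pos ⟨h0, hu⟩] at hLr
          rw [if_neg (by simp [hu, not_le])] at hBr
          omega
        · have hz : ζ n ω = 0 := by simp [hζ, h0, hu]
          rw [if_neg (by simp [hu]), if_neg (by simp [h0])] at hLr
          rw [if_pos ⟨h0, le_of_not_gt hu⟩] at hBr
          omega
      · have hz : ζ n ω = -1 := by simp [hζ, h1]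
        rw [if_neg (by simp [h1])] at hBr
        rw [if_neg (by simp [h1])] at hLr
        have hXr' : X (n+1) ω = X n ω - (if X n ω = 0 then 0 else 1) := by
          rw [hXr, h1]; simp
        by_cases hl : 0 < L n ω
        · rw [if_pos ⟨h1, hl⟩] at hLr
          have hx : ¬ X n ω = 0 := by omega
          rw [if_neg hx] at hXr'
          omega
        · rw [if_neg (by simp [hl])] at hLr
          -- increment case: L (n+1) = L n = 0
          have htoNat : (- Sz (n+1) ω : ℤ) ≤ ((- Sz (n+1) ω).toNat : ℤ) := Int.self_le_toNat _
          by_cases hx : X n ω = 0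
          · rw [if_pos hx] at hXr'; omega
          · rw [if_neg hx] at hXr'; omega
  -- link integer and real walks
  have hξζ : ∀ (i : ℕ) (ω : Ω), ξ i ω = ((ζ i ω : ℤ) : ℝ) := by
    intro i ω
    rw [hξ, hζ]
    rcases hJ01 i ω with h | h <;> by_cases hu : U i ω < q / p <;>
      simp [h, hu] <;> norm_num
  have hSreal : ∀ (n : ℕ) (ω : Ω), ∑ i ∈ Finset.range n, ξ i ω = ((Sz n ω : ℤ) : ℝ) := by
    intro n ω
    rw [hSz]
    push_cast
    exact Finset.sum_congr rfl fun i _ => hξζ i ω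
  -- final argument
  filter_upwards [hBC] with ω hω
  obtain ⟨f, hf⟩ : ∃ f : ℕ → ℝ, f = fun n : ℕ =>
      ((B n ω : ℝ) - (R n ω : ℝ)) / (n : ℝ) ^ ((1 : ℝ) / 2 + ε) := ⟨_, rfl⟩
  rw [← hf]
  have hnum : ∀ n, (B n ω : ℝ) - (R n ω : ℝ) = (((B n ω : ℤ) - R n ω : ℤ) : ℝ) := by
    intro n; push_cast; ring
  have hfnn : ∀ n, 0 ≤ f n := by
    intro n
    rw [hf]
    apply div_nonneg _ (Real.rpow_nonneg (Nat.cast_nonneg n) _)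
    rw [hnum n]
    exact_mod_cast ((hkey ω n).1).1
  have hmain : ∀ m : ℕ, ∀ᶠ n in atTop, f n ≤ 2 / ((m : ℝ) + 1) := by
    intro m
    have hδ0 : (0:ℝ) < 1 / ((m:ℝ)+1) := by positivity
    have hωm := hω m
    rw [eventually_atTop] at hωm
    obtain ⟨N0, hN0⟩ := hωm
    set N := N0 + 1 with hNdef
    have hSbound : ∀ k, N ≤ k → ((-(Sz k ω) : ℤ) : ℝ)
        ≤ (1/((m:ℝ)+1)) * (k:ℝ)^((1:ℝ)/2+ε) := by
      intro k hk
      have h := hN0 (k-1) (by omega)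
      have hkk : k - 1 + 1 = k := by omega
      rw [hkk] at h
      simp only [Set.mem_setOf_eq, not_le] at h
      rw [Int.cast_neg, ← hSreal k ω]
      linarith
    set C : ℝ := ((supN N ω : ℕ) : ℝ) with hCdef
    have hCnn : 0 ≤ C := Nat.cast_nonneg _
    have hfle : ∀ n, N ≤ n → f n ≤ C/(n:ℝ)^((1:ℝ)/2+ε) + 1/((m:ℝ)+1) := by
      intro n hn
      have hn1 : 1 ≤ n := by omega
      have hnn0 : (0:ℝ) < (n:ℝ) := by exact_mod_cast hn1
      have hnr : (0:ℝ) < (n:ℝ)^((1:ℝ)/2+ε) := Real.rpow_pos_of_pos hnn0 _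
      have hΔ : (B n ω:ℝ) - (R n ω:ℝ) ≤ ((supN n ω : ℕ) : ℝ) := by
        rw [hnum n]
        exact_mod_cast le_trans ((hkey ω n).1).2 (hkey ω n).2
      obtain ⟨k0, hk0mem, hk0⟩ := Finset.exists_mem_eq_sup (Finset.range (n+1))
        (by simp) (fun k => (- Sz k ω).toNat)
      have hk0n : k0 ≤ n := by
        have := Finset.mem_range.mp hk0mem; omega
      have hsupval : supN n ω = (- Sz k0 ω).toNat := by rw [hsupN]; exact hk0
      have hsupb : ((supN n ω : ℕ) : ℝ) ≤ C + (1/((m:ℝ)+1)) * (n:ℝ)^((1:ℝ)/2+ε) := by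
        have hrpnn : (0:ℝ) ≤ (1/((m:ℝ)+1)) * (n:ℝ)^((1:ℝ)/2+ε) := by positivity
        by_cases hcase : k0 < N
        · have h1 : supN n ω ≤ supN N ω := by
            rw [hsupval, hsupN]
            exact Finset.le_sup (f := fun k => (- Sz k ω).toNat)
              (Finset.mem_range.mpr (by omega))
          have h2 : ((supN n ω : ℕ) : ℝ) ≤ C := by
            rw [hCdef]; exact_mod_cast h1
          linarith
        · push_neg at hcase
          have h2 := hSbound k0 hcase
          have htn : (((- Sz k0 ω).toNat : ℕ) : ℝ)
              ≤ (1/((m:ℝ)+1)) * (k0:ℝ)^((1:ℝ)/2+ε) := by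
            rcases le_or_gt (- Sz k0 ω) 0 with hz | hz
            · simp only [Int.toNat_of_nonpos hz, Nat.cast_zero]
              positivity
            · have hzz : (((- Sz k0 ω).toNat : ℕ) : ℤ) = - Sz k0 ω :=
                Int.toNat_of_nonneg hz.le
              have hcast : (((- Sz k0 ω).toNat : ℕ) : ℝ) = ((-(Sz k0 ω) : ℤ) : ℝ) := by
                exact_mod_cast hzz
              rw [hcast]
              exact h2
          have hmono : (k0:ℝ)^((1:ℝ)/2+ε) ≤ (n:ℝ)^((1:ℝ)/2+ε) :=
            Real.rpow_le_rpow (Nat.cast_nonneg _) (by exact_mod_cast hk0n) (by linarith)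
          have h3 : ((supN n ω : ℕ) : ℝ) ≤ (1/((m:ℝ)+1)) * (n:ℝ)^((1:ℝ)/2+ε) := by
            rw [hsupval]
            calc (((- Sz k0 ω).toNat : ℕ) : ℝ)
                ≤ (1/((m:ℝ)+1)) * (k0:ℝ)^((1:ℝ)/2+ε) := htn
              _ ≤ (1/((m:ℝ)+1)) * (n:ℝ)^((1:ℝ)/2+ε) :=
                  mul_le_mul_of_nonneg_left hmono hδ0.le
          linarith
      have hfn : f n = ((B n ω:ℝ) - (R n ω:ℝ)) / (n:ℝ)^((1:ℝ)/2+ε) := by rw [hf]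
      rw [hfn]
      calc ((B n ω:ℝ) - (R n ω:ℝ)) / (n:ℝ)^((1:ℝ)/2+ε)
          ≤ (C + (1/((m:ℝ)+1)) * (n:ℝ)^((1:ℝ)/2+ε)) / (n:ℝ)^((1:ℝ)/2+ε) := by
            gcongr
            exact hΔ.trans hsupb
        _ = C/(n:ℝ)^((1:ℝ)/2+ε) + 1/((m:ℝ)+1) := by
            rw [add_div, mul_div_assoc, div_self hnr.ne', mul_one]
    have hlim : Tendsto (fun n : ℕ => C/(n:ℝ)^((1:ℝ)/2+ε)) atTop (nhds 0) :=
      Tendsto.div_atTop tendsto_const_nhds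
        ((tendsto_rpow_atTop (by linarith)).comp tendsto_natCast_atTop_atTop)
    have hev : ∀ᶠ n : ℕ in atTop, C/(n:ℝ)^((1:ℝ)/2+ε) ≤ 1/((m:ℝ)+1) :=
      hlim.eventually (eventually_le_nhds hδ0)
    filter_upwards [hev, eventually_ge_atTop N] with n h1 h2
    have h3 := hfle n h2
    have heq : 2/((m:ℝ)+1) = 1/((m:ℝ)+1) + 1/((m:ℝ)+1) := by ring
    rw [heq]
    linarith
  have hcob : IsCoboundedUnder (· ≤ ·) atTop f := isCoboundedUnder_le_of_le atTop hfnn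
  have hlimsup_le : ∀ m : ℕ, limsup f atTop ≤ 2 / ((m : ℝ) + 1) := fun m =>
    limsup_le_of_le hcob (hmain m)
  have hbddf : IsBoundedUnder (· ≤ ·) atTop f := isBoundedUnder_of_eventually_le (hmain 0)
  constructor
  · exact le_limsup_of_frequently_le (Frequently.of_forall hfnn) hbddf
  · have h0 : limsup f atTop ≤ 0 := by
      by_contra hpos
      push_neg at hpos
      obtain ⟨m, hm⟩ := exists_nat_gt (2 / limsup f atTop)
      have h2m : 2 / ((m : ℝ) + 1) < limsup f atTop := by
        rw [div_lt_iff₀ (by positivity)]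
        rw [div_lt_iff₀ hpos] at hm
        nlinarith
      exact absurd (hlimsup_le m) (not_le.mpr h2m)
    have h2q : (0:ℝ) ≤ 2 / q := by positivity
    linarith
end

section
/- For every n ≥ 0 one has, pointwise on the sample space, B_n − R_n = η_n − Σ_{i=0}^{n−1} J_i·1{X_i = 0}, where η_n = Σ_{i=0}^{n−1} J_i·1{L_i = 0}. -/
open MeasureTheory ProbabilityTheory Filter

/-- **GMS model, pointwise decomposition of `B_n − R_n`.**
`B_n − R_n = η_n − Σ_{i<n} J_i·1{X_i = 0}` with `η_n = Σ_{i<n} J_i·1{L_i = 0}`. -/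
theorem gms_B_sub_R_decomposition
    {Ω : Type*} [MeasurableSpace Ω] (μ : Measure Ω) [IsProbabilityMeasure μ]
    (p q : ℝ) (hp : 1 / 2 < p) (hp1 : p < 1) (hq : q = 1 - p)
    (J : ℕ → Ω → ℕ) (U : ℕ → Ω → ℝ)
    (hJmeas : ∀ n, Measurable (J n))
    (hUmeas : ∀ n, Measurable (U n))
    (hJval : ∀ n ω, J n ω ≤ 1)
    (hJdist : ∀ n, μ {ω | J n ω = 1} = ENNReal.ofReal q)
    (hUdist : ∀ n, Measure.map (U n) μ = volume.restrict (Set.Icc (0 : ℝ) 1))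
    (hindep : iIndepFun
      (Sum.elim (fun n ω => (J n ω : ℝ)) U) μ)
    (X L : ℕ → Ω → ℕ)
    (hX0 : ∀ ω, X 0 ω = 0)
    (hX : ∀ n ω, X (n + 1) ω = X n ω + (1 - J n ω) - (if X n ω = 0 then 0 else J n ω))
    (hL0 : ∀ ω, L 0 ω = 0)
    (hL : ∀ n ω, L (n + 1) ω =
      if J n ω = 0 ∧ U n ω < q / p then L n ω + 1
      else if J n ω = 1 ∧ 0 < L n ω then L n ω - 1 else L n ω)
    (B : ℕ → Ω → ℕ)
    (hB : ∀ n ω, B n ω =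
      ((Finset.range n).filter (fun i => J i ω = 0 ∧ q / p ≤ U i ω)).card)
    (R : ℕ → Ω → ℤ)
    (hR : ∀ n ω, R n ω = (X n ω : ℤ) - (L n ω : ℤ)) :
    ∀ n : ℕ, ∀ ω : Ω,
      (B n ω : ℤ) - R n ω =
        (∑ i ∈ Finset.range n, (J i ω : ℤ) * (if L i ω = 0 then 1 else 0)) -
        (∑ i ∈ Finset.range n, (J i ω : ℤ) * (if X i ω = 0 then 1 else 0)) := by
  intro n ω
  induction n with
  | zero => simp [hB, hR, hX0, hL0]
  | succ n ih =>
    rw [Finset.sum_range_succ, Finset.sum_range_succ]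
    have hBs : (B (n + 1) ω : ℤ) =
        (B n ω : ℤ) + (if J n ω = 0 ∧ q / p ≤ U n ω then 1 else 0) := by
      rw [hB (n + 1), hB n, Finset.range_add_one, Finset.filter_insert]
      split_ifs with h
      · rw [Finset.card_insert_of_notMem (by simp [Finset.mem_filter])]
        push_cast; ring
      · simp
    have hXs := hX n ω
    have hLs := hL n ω
    have key : ((if J n ω = 0 ∧ q / p ≤ U n ω then 1 else 0 : ℤ))
        - (((X (n + 1) ω : ℤ) - (L (n + 1) ω : ℤ))
            - ((X n ω : ℤ) - (L n ω : ℤ)))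
        = (J n ω : ℤ) * (if L n ω = 0 then 1 else 0)
          - (J n ω : ℤ) * (if X n ω = 0 then 1 else 0) := by
      rcases Nat.le_one_iff_eq_zero_or_eq_one.mp (hJval n ω) with hJ | hJ
      · have hX' : X (n + 1) ω = X n ω + 1 := by rw [hXs]; simp [hJ]
        rcases lt_or_ge (U n ω) (q / p) with hU | hU
        · have hL' : L (n + 1) ω = L n ω + 1 := by rw [hLs]; simp [hJ, hU]
          rw [hX', hL',
            if_neg (by rintro ⟨-, h⟩; exact absurd h (not_le.mpr hU))]
          simp [hJ]
        · have hL' : L (n + 1) ω = L n ω := by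
            rw [hLs]; simp [hJ, not_lt.mpr hU]
          rw [hX', hL', if_pos ⟨hJ, hU⟩]
          simp [hJ]
      · have hX' : X (n + 1) ω = X n ω - (if X n ω = 0 then 0 else 1) := by
          rw [hXs]; simp [hJ]
        have hL' : L (n + 1) ω = L n ω - (if L n ω = 0 then 0 else 1) := by
          rw [hLs]; simp [hJ]; split_ifs <;> omega
        rw [hX', hL', if_neg (by simp [hJ])]
        simp [hJ]
        split_ifs <;> omega
    have hRs' := hR (n + 1) ω
    have hRn' := hR n ω
    have ih' := ih
    rw [hRn'] at ih'
    rw [hBs, hRs']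
    linarith [key, ih']
end

section
/- The expected number of time indices i during the first excursion of L from 0 at which L_i = 0 and J_i = 1 equals 1; that is, E[Σ_{i=0}^{σ_2 − 1} J_i·1{L_i = 0}] = 1, where σ_2 = inf{n > 0 : L_{n−1} = 1 and L_n = 0}. -/
open MeasureTheory ProbabilityTheory Filter
open scoped ENNReal Classical

/-- **GMS model: expected occupation of `(0,1)` during one excursion of `L`.**
`E[Σ_{i=0}^{σ₂−1} J_i·1{L_i = 0}] = 1`, where `σ₂ = inf{n > 0 : L_{n−1} = 1 ∧ L_n = 0}`
(the index `i` ranges over times strictly before the first return of `L` to `0` from `1`). -/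
theorem gms_excursion_occupation_mean_one
    {Ω : Type*} [MeasurableSpace Ω] (μ : Measure Ω) [IsProbabilityMeasure μ]
    (p q : ℝ) (hp : 1 / 2 < p) (hp1 : p < 1) (hq : q = 1 - p)
    (J : ℕ → Ω → ℕ) (U : ℕ → Ω → ℝ)
    (hJmeas : ∀ n, Measurable (J n))
    (hUmeas : ∀ n, Measurable (U n))
    (hJval : ∀ n ω, J n ω ≤ 1)
    (hJdist : ∀ n, μ {ω | J n ω = 1} = ENNReal.ofReal q)
    (hUdist : ∀ n, Measure.map (U n) μ = volume.restrict (Set.Icc (0 : ℝ) 1))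
    (hindep : iIndepFun
      (Sum.elim (fun n ω => (J n ω : ℝ)) U) μ)
    (L : ℕ → Ω → ℕ)
    (hL0 : ∀ ω, L 0 ω = 0)
    (hL : ∀ n ω, L (n + 1) ω =
      if J n ω = 0 ∧ U n ω < q / p then L n ω + 1
      else if J n ω = 1 ∧ 0 < L n ω then L n ω - 1 else L n ω)
    :
    ∫⁻ ω, (∑' i : ℕ,
        if (∀ k ≤ i, ¬(0 < k ∧ L (k - 1) ω = 1 ∧ L k ω = 0)) ∧ J i ω = 1 ∧ L i ω = 0
        then (1 : ℝ≥0∞) else 0) ∂μ = 1 := by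
  -- basic numerics
  have hq0 : 0 < q := by rw [hq]; linarith
  have hq1 : q < 1 := by rw [hq]; linarith
  have hp0 : 0 < p := by linarith
  have hqp : q < p := by rw [hq]; linarith
  have hqp0 : 0 < q / p := div_pos hq0 hp0
  have hqp1 : q / p < 1 := (div_lt_one hp0).2 hqp
  set X : ℕ ⊕ ℕ → Ω → ℝ := Sum.elim (fun n ω => (J n ω : ℝ)) U with hXdef
  have hXmeas : ∀ s, Measurable (X s) := by
    rintro (n | n)
    · exact measurable_from_top.comp (hJmeas n)
    · exact hUmeas n
  -- the elementary events
  set C : ℕ → Set Ω := fun j => {ω | J j ω = 0 ∧ U j ω < q / p} with hCdef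
  set D : ℕ → Set Ω := fun n => ⋂ j ∈ Finset.range n, (C j)ᶜ with hDdef
  set E1 : ℕ → Set Ω := fun n => {ω | J n ω = 1} with hE1def
  have hCeq : ∀ j, C j = (X (Sum.inl j)) ⁻¹' {0} ∩ (X (Sum.inr j)) ⁻¹' (Set.Iio (q / p)) := by
    intro j; ext ω
    simp [hCdef, hXdef, Nat.cast_eq_zero]
  have hE1eq : ∀ n, E1 n = (X (Sum.inl n)) ⁻¹' {1} := by
    intro n; ext ω
    simp [hE1def, hXdef, Nat.cast_eq_one]
  have hCmeas : ∀ j, MeasurableSet (C j) := by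
    intro j
    rw [hCeq j]
    exact ((hXmeas _) (measurableSet_singleton _)).inter ((hXmeas _) measurableSet_Iio)
  have hE1meas : ∀ n, MeasurableSet (E1 n) := by
    intro n
    rw [hE1eq n]
    exact (hXmeas _) (measurableSet_singleton _)
  have hDmeas : ∀ n, MeasurableSet (D n) := by
    intro n
    exact Finset.measurableSet_biInter _ fun j _ => (hCmeas j).compl
  -- J only takes values 0 and 1
  have hJ01 : ∀ n ω, J n ω = 0 ∨ J n ω = 1 := by
    intro n ω; have := hJval n ω; omega
  -- elementary probabilities
  have hofq1 : ENNReal.ofReal q ≤ 1 := ENNReal.ofReal_le_one.2 (by linarith)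
  have hone_sub : (1 : ℝ≥0∞) - ENNReal.ofReal q = ENNReal.ofReal p := by
    rw [← ENNReal.ofReal_one, ← ENNReal.ofReal_sub _ hq0.le]
    congr 1; rw [hq]; ring
  have hJ0prob : ∀ n, μ {ω | J n ω = 0} = ENNReal.ofReal p := by
    intro n
    have hset : {ω | J n ω = 0} = (E1 n)ᶜ := by
      ext ω; have := hJval n ω
      simp only [hE1def, Set.mem_setOf_eq, Set.mem_compl_iff]
      omega
    rw [hset, measure_compl (hE1meas n) (measure_ne_top μ _), measure_univ, hJdist n, hone_sub]
  have hUprob : ∀ n, μ ((U n) ⁻¹' (Set.Iio (q / p))) = ENNReal.ofReal (q / p) := by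
    intro n
    rw [← Measure.map_apply (hUmeas n) measurableSet_Iio, hUdist n,
      Measure.restrict_apply measurableSet_Iio]
    have hset : Set.Iio (q / p) ∩ Set.Icc (0 : ℝ) 1 = Set.Ico 0 (q / p) := by
      ext x
      simp only [Set.mem_inter_iff, Set.mem_Iio, Set.mem_Icc, Set.mem_Ico]
      constructor
      · rintro ⟨h1, h2, h3⟩; exact ⟨h2, h1⟩
      · rintro ⟨h1, h2⟩; exact ⟨h2, h1, by linarith⟩
    rw [hset, Real.volume_Ico]
    simp
  have hCprob : ∀ n, μ (C n) = ENNReal.ofReal q := by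
    intro n
    have hpair : IndepFun (X (Sum.inl n)) (X (Sum.inr n)) μ :=
      hindep.indepFun (by simp)
    rw [hCeq n, hpair.meas_inter ⟨{0}, measurableSet_singleton _, rfl⟩
      ⟨Set.Iio (q / p), measurableSet_Iio, rfl⟩]
    have h1 : (X (Sum.inl n)) ⁻¹' {0} = {ω | J n ω = 0} := by
      ext ω; simp [hXdef, Nat.cast_eq_zero]
    have h2 : (X (Sum.inr n)) ⁻¹' (Set.Iio (q / p)) = (U n) ⁻¹' (Set.Iio (q / p)) := rfl
    rw [h1, h2, hJ0prob n, hUprob n, ← ENNReal.ofReal_mul hp0.le]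
    congr 1
    field_simp
  have hBprob : ∀ n, μ ((C n)ᶜ) = ENNReal.ofReal p := by
    intro n
    rw [measure_compl (hCmeas n) (measure_ne_top μ _), measure_univ, hCprob n, hone_sub]
  -- grouping independence: D n is independent of any event over coordinates (inl n, inr n)
  have key : ∀ (n : ℕ) (E : Set Ω),
      MeasurableSet[⨆ s ∈ ({Sum.inl n, Sum.inr n} : Set (ℕ ⊕ ℕ)),
        MeasurableSpace.comap (X s) inferInstance] E →
      μ (D n ∩ E) = μ (D n) * μ E := by
    intro n E hE
    set S : Set (ℕ ⊕ ℕ) := {s | ∃ j, j < n ∧ (s = Sum.inl j ∨ s = Sum.inr j)} with hSdef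
    set T : Set (ℕ ⊕ ℕ) := {Sum.inl n, Sum.inr n} with hTdef
    have hST : Disjoint S T := by
      rw [Set.disjoint_left]
      rintro s ⟨j, hj, hs⟩ hT
      rcases hs with rfl | rfl <;>
        rcases hT with h | h <;> simp_all
    have hind :=
      indep_iSup_of_disjoint (fun s => (hXmeas s).comap_le) hindep.iIndep hST
    have hDm : MeasurableSet[⨆ s ∈ S, MeasurableSpace.comap (X s) inferInstance] (D n) := by
      apply Finset.measurableSet_biInter
      intro j hj
      rw [Finset.mem_range] at hj
      apply MeasurableSet.compl
      rw [hCeq j]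
      apply MeasurableSet.inter
      · exact le_iSup₂ (f := fun s (_ : s ∈ S) => MeasurableSpace.comap (X s) inferInstance)
          (Sum.inl j) ⟨j, hj, Or.inl rfl⟩ _ ⟨{0}, measurableSet_singleton _, rfl⟩
      · exact le_iSup₂ (f := fun s (_ : s ∈ S) => MeasurableSpace.comap (X s) inferInstance)
          (Sum.inr j) ⟨j, hj, Or.inr rfl⟩ _ ⟨Set.Iio (q / p), measurableSet_Iio, rfl⟩
    exact (Indep_iff _ _ _).1 hind (D n) E hDm hE
  have hinlT : ∀ n, (Sum.inl n : ℕ ⊕ ℕ) ∈ ({Sum.inl n, Sum.inr n} : Set (ℕ ⊕ ℕ)) := by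
    intro n; simp
  have hinrT : ∀ n, (Sum.inr n : ℕ ⊕ ℕ) ∈ ({Sum.inl n, Sum.inr n} : Set (ℕ ⊕ ℕ)) := by
    intro n; simp
  -- μ (D n) = p^n by induction
  have hDprob : ∀ n, μ (D n) = (ENNReal.ofReal p) ^ n := by
    intro n
    induction n with
    | zero => simp [hDdef]
    | succ m ih =>
      have hsplit : D (m + 1) = D m ∩ (C m)ᶜ := by
        ext ω
        simp only [hDdef, Set.mem_iInter, Finset.mem_range, Set.mem_inter_iff]
        constructor
        · intro h; exact ⟨fun j hj => h j (by omega), h m (by omega)⟩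
        · rintro ⟨h1, h2⟩ j hj
          rcases Nat.lt_succ_iff_lt_or_eq.mp hj with h | rfl
          · exact h1 j h
          · exact h2
      have hBm : MeasurableSet[⨆ s ∈ ({Sum.inl m, Sum.inr m} : Set (ℕ ⊕ ℕ)),
          MeasurableSpace.comap (X s) inferInstance] ((C m)ᶜ) := by
        apply MeasurableSet.compl
        rw [hCeq m]
        apply MeasurableSet.inter
        · exact le_iSup₂ (f := fun s (_ : s ∈ ({Sum.inl m, Sum.inr m} : Set (ℕ ⊕ ℕ))) =>
            MeasurableSpace.comap (X s) inferInstance)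
            (Sum.inl m) (hinlT m) _ ⟨{0}, measurableSet_singleton _, rfl⟩
        · exact le_iSup₂ (f := fun s (_ : s ∈ ({Sum.inl m, Sum.inr m} : Set (ℕ ⊕ ℕ))) =>
            MeasurableSpace.comap (X s) inferInstance)
            (Sum.inr m) (hinrT m) _ ⟨Set.Iio (q / p), measurableSet_Iio, rfl⟩
      rw [hsplit, key m _ hBm, ih, hBprob m]
      ring
  -- μ (D i ∩ E1 i) = p^i * q
  have hterm : ∀ i, μ (D i ∩ E1 i) = (ENNReal.ofReal p) ^ i * ENNReal.ofReal q := by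
    intro i
    have hE1m : MeasurableSet[⨆ s ∈ ({Sum.inl i, Sum.inr i} : Set (ℕ ⊕ ℕ)),
        MeasurableSpace.comap (X s) inferInstance] (E1 i) := by
      rw [hE1eq i]
      exact le_iSup₂ (f := fun s (_ : s ∈ ({Sum.inl i, Sum.inr i} : Set (ℕ ⊕ ℕ))) =>
        MeasurableSpace.comap (X s) inferInstance)
        (Sum.inl i) (hinlT i) _ ⟨{1}, measurableSet_singleton _, rfl⟩
    rw [key i _ hE1m, hDprob i, hJdist i]
  -- pathwise identification of the summand's condition
  have path1 : ∀ (ω : Ω) (i : ℕ),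
      (∀ j, j ≤ i → L j ω = 0) ↔ ∀ j, j < i → ¬(J j ω = 0 ∧ U j ω < q / p) := by
    intro ω i
    constructor
    · intro h j hj hup
      have h1 := h j hj.le
      have h2 := h (j + 1) hj
      rw [hL j ω, if_pos hup, h1] at h2
      omega
    · intro h j hj
      induction j with
      | zero => exact hL0 ω
      | succ k ih =>
        have hk : L k ω = 0 := ih (by omega)
        rw [hL k ω, if_neg (h k (by omega)), if_neg, hk]
        rintro ⟨-, hpos⟩
        rw [hk] at hpos
        exact lt_irrefl 0 hpos
  have path2 : ∀ (ω : Ω) (i : ℕ),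
      ((∀ k, k ≤ i → ¬(0 < k ∧ L (k - 1) ω = 1 ∧ L k ω = 0)) ∧ L i ω = 0) ↔
        ∀ j, j ≤ i → L j ω = 0 := by
    intro ω i
    constructor
    · rintro ⟨hnp, hLi⟩
      induction i with
      | zero =>
        intro j hj
        have : j = 0 := Nat.le_zero.mp hj
        rw [this]; exact hL0 ω
      | succ m ih =>
        by_cases hm : L m ω = 0
        · have hprev := ih (fun k hk => hnp k (by omega)) hm
          intro j hj
          rcases Nat.lt_succ_iff_lt_or_eq.mp (Nat.lt_succ_of_le hj) with h | rfl
          · exact hprev j (by omega)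
          · exact hLi
        · exfalso
          have hpos : 0 < L m ω := Nat.pos_of_ne_zero hm
          have hstep := hL m ω
          by_cases h1 : J m ω = 0 ∧ U m ω < q / p
          · rw [if_pos h1] at hstep
            rw [hstep] at hLi
            omega
          · rw [if_neg h1] at hstep
            by_cases h2 : J m ω = 1 ∧ 0 < L m ω
            · rw [if_pos h2] at hstep
              rw [hstep] at hLi
              have hm1 : L m ω = 1 := by omega
              exact hnp (m + 1) le_rfl ⟨Nat.succ_pos m, by simpa using hm1, by
                rw [hstep]; omega⟩
            · rw [if_neg h2] at hstep
              rw [hstep] at hLi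
              exact hm hLi
    · intro h
      refine ⟨?_, h i le_rfl⟩
      rintro k hk ⟨hk0, hk1, -⟩
      have : L (k - 1) ω = 0 := h (k - 1) (by omega)
      omega
  have hcond : ∀ (ω : Ω) (i : ℕ),
      ((∀ k ≤ i, ¬(0 < k ∧ L (k - 1) ω = 1 ∧ L k ω = 0)) ∧ J i ω = 1 ∧ L i ω = 0) ↔
        ω ∈ D i ∩ E1 i := by
    intro ω i
    have hDmem : ω ∈ D i ↔ ∀ j, j < i → ¬(J j ω = 0 ∧ U j ω < q / p) := by
      simp [hDdef, hCdef, Finset.mem_range]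
    constructor
    · rintro ⟨hnp, hJ1, hLi⟩
      have h0 : ∀ j, j ≤ i → L j ω = 0 := (path2 ω i).1 ⟨fun k hk => hnp k hk, hLi⟩
      refine ⟨hDmem.2 ((path1 ω i).1 h0), hJ1⟩
    · rintro ⟨hD, hJ1⟩
      have h0 : ∀ j, j ≤ i → L j ω = 0 := (path1 ω i).2 (hDmem.1 hD)
      have h2 := (path2 ω i).2 h0
      exact ⟨fun k hk => h2.1 k hk, hJ1, h2.2⟩
  -- rewrite the integrand as a sum of indicators
  have hfun : ∀ ω : Ω,
      (∑' i : ℕ, if (∀ k ≤ i, ¬(0 < k ∧ L (k - 1) ω = 1 ∧ L k ω = 0)) ∧ J i ω = 1 ∧ L i ω = 0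
        then (1 : ℝ≥0∞) else 0)
      = ∑' i : ℕ, (D i ∩ E1 i).indicator (fun _ => (1 : ℝ≥0∞)) ω := by
    intro ω
    congr 1
    funext i
    rw [Set.indicator_apply]
    exact if_congr (hcond ω i) rfl rfl
  calc ∫⁻ ω, (∑' i : ℕ,
        if (∀ k ≤ i, ¬(0 < k ∧ L (k - 1) ω = 1 ∧ L k ω = 0)) ∧ J i ω = 1 ∧ L i ω = 0
        then (1 : ℝ≥0∞) else 0) ∂μ
      = ∫⁻ ω, (∑' i : ℕ, (D i ∩ E1 i).indicator (fun _ => (1 : ℝ≥0∞)) ω) ∂μ := by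
        exact lintegral_congr hfun
    _ = ∑' i : ℕ, ∫⁻ ω, (D i ∩ E1 i).indicator (fun _ => (1 : ℝ≥0∞)) ω ∂μ := by
        refine lintegral_tsum fun i => ?_
        exact (measurable_const.indicator ((hDmeas i).inter (hE1meas i))).aemeasurable
    _ = ∑' i : ℕ, μ (D i ∩ E1 i) := by
        congr 1
        funext i
        exact lintegral_indicator_one ((hDmeas i).inter (hE1meas i))
    _ = ∑' i : ℕ, (ENNReal.ofReal p) ^ i * ENNReal.ofReal q := by
        congr 1
        funext i
        exact hterm i
    _ = (∑' i : ℕ, (ENNReal.ofReal p) ^ i) * ENNReal.ofReal q := ENNReal.tsum_mul_right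
    _ = (1 - ENNReal.ofReal p)⁻¹ * ENNReal.ofReal q := by rw [ENNReal.tsum_geometric]
    _ = (ENNReal.ofReal q)⁻¹ * ENNReal.ofReal q := by
        congr 1
        rw [← ENNReal.ofReal_one, ← ENNReal.ofReal_sub _ hp0.le]
        congr 1
        rw [hq]
    _ = 1 := by
        rw [ENNReal.inv_mul_cancel]
        · simp [hq0]
        · exact ENNReal.ofReal_ne_top
end
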